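/- arXiv:2211.06563 — 4 statements merged into one kernel-verified Lean document; each statement's English description precedes it below -/
import Mathlib

section
/- Let K be a field and let A be a right prolongable monomial algebra on generators x_1,…,x_d over K. The following are equivalent: (1) A is amenable as a right module over itself; (2) for every D ∈ ℕ there exists a nonzero monomial u of A such that there is at most one monomial v of length D with uv ≠ 0; (3) A has a Følner sequence as a right module over itself consisting of subspaces spanned by monomials (with respect to the generating subspace span_K{1, x_1,…,x_d}); (4) A is exhaustively amenable as a right module over itself. -/
noncomputable section

namespace Paper

open Module Filter MulOpposite

/-- The free associative unital `K`-algebra on a set `σ` of generators,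
realized as the monoid algebra of the free monoid on `σ`. -/
abbrev FreeAlg (K : Type) [Field K] (σ : Type) : Type := MonoidAlgebra K (FreeMonoid σ)

/-- The monomial of the free algebra corresponding to a word `w`. -/
def wrd (K : Type) [Field K] {σ : Type} (w : List σ) : FreeAlg K σ :=
  MonoidAlgebra.of K (FreeMonoid σ) (FreeMonoid.ofList w)

variable (K : Type) [Field K]

section Defs

variable {σ : Type} {A : Type} [Ring A] [Algebra K A]

/-- `a` is a monomial of `A` (i.e. the image of a word under the presentation `π`). -/
def IsMono (π : FreeAlg K σ →ₐ[K] A) (a : A) : Prop :=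
  ∃ w : List σ, a = π (wrd K w)

/-- `a` is a monomial of `A` of length `D`. -/
def IsMonoLen (π : FreeAlg K σ →ₐ[K] A) (D : ℕ) (a : A) : Prop :=
  ∃ w : List σ, w.length = D ∧ a = π (wrd K w)

/-- `π` presents `A` as a monomial algebra: `π` is onto and its kernel is spanned by the
monomials it contains (equivalently, it is generated as a two-sided ideal by monomials). -/
def MonomialPresentation (π : FreeAlg K σ →ₐ[K] A) : Prop :=
  Function.Surjective π ∧
    ∀ a : FreeAlg K σ, π a = 0 ↔
      a ∈ Submodule.span K {m : FreeAlg K σ | ∃ w : List σ, m = wrd K w ∧ π (wrd K w) = 0}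

/-- Every nonzero monomial of `A` is right prolongable. -/
def RightProlongable (π : FreeAlg K σ →ₐ[K] A) : Prop :=
  ∀ a : A, IsMono K π a → a ≠ 0 → ∃ w : List σ, w ≠ [] ∧ a * π (wrd K w) ≠ 0

/-- A subspace of `A` spanned by monomials. -/
def MonomialSubspace (π : FreeAlg K σ →ₐ[K] A) (L : Submodule K A) : Prop :=
  ∃ S : Set (List σ), L = Submodule.span K ((fun w => π (wrd K w)) '' S)

/-- The standard generating subspace, spanned by `1` together with the generators. -/
def genV (π : FreeAlg K σ →ₐ[K] A) : Submodule K A :=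
  Submodule.span K ({1} ∪ Set.range fun i : σ => π (wrd K [i]))

end Defs

section Amen

/-- `L` is a `(V, ε)`-invariant subspace of `A`, viewed as a right module over itself:
`dim (L·V) < (1+ε) · dim L`. -/
def RInv {A : Type} [Ring A] [Algebra K A] (L V : Submodule K A) (ε : ℝ) : Prop :=
  FiniteDimensional K L ∧ FiniteDimensional K (L * V : Submodule K A) ∧
    (finrank K (L * V : Submodule K A) : ℝ) < (1 + ε) * (finrank K L : ℝ)

/-- `L` is a `(V, ε)`-invariant subspace of `A`, viewed as a left module over itself. -/
def LInv {A : Type} [Ring A] [Algebra K A] (L V : Submodule K A) (ε : ℝ) : Prop :=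
  FiniteDimensional K L ∧ FiniteDimensional K (V * L : Submodule K A) ∧
    (finrank K (V * L : Submodule K A) : ℝ) < (1 + ε) * (finrank K L : ℝ)

/-- `A` is amenable as a right module over itself. -/
def RightSelfAmenable (A : Type) [Ring A] [Algebra K A] : Prop :=
  ∀ V : Submodule K A, FiniteDimensional K V → ∀ ε : ℝ, 0 < ε →
    ∃ L : Submodule K A, RInv K L V ε

/-- `A` is exhaustively amenable as a right module over itself. -/
def RightSelfExhAmenable (A : Type) [Ring A] [Algebra K A] : Prop :=
  ∀ V : Submodule K A, FiniteDimensional K V → ∀ ε : ℝ, 0 < ε →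
    ∀ W : Submodule K A, FiniteDimensional K W →
      ∃ L : Submodule K A, W ≤ L ∧ RInv K L V ε

/-- `A` is exhaustively amenable as a left module over itself. -/
def LeftSelfExhAmenable (A : Type) [Ring A] [Algebra K A] : Prop :=
  ∀ V : Submodule K A, FiniteDimensional K V → ∀ ε : ℝ, 0 < ε →
    ∀ W : Submodule K A, FiniteDimensional K W →
      ∃ L : Submodule K A, W ≤ L ∧ LInv K L V ε

/-- For a right `A`-module `M` (encoded via an `Aᵐᵒᵖ`-action), the subspace `L·V`,
spanned by `{ℓ·v : ℓ ∈ L, v ∈ V}`. -/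
def rLV {A M : Type} [Ring A] [Algebra K A] [AddCommGroup M] [Module K M] [Module Aᵐᵒᵖ M]
    (L : Submodule K M) (V : Submodule K A) : Submodule K M :=
  Submodule.span K {x : M | ∃ l ∈ L, ∃ v ∈ V, x = (op v) • l}

/-- `L` is a `(V, ε)`-invariant subspace of the right `A`-module `M`. -/
def RModInv {A M : Type} [Ring A] [Algebra K A] [AddCommGroup M] [Module K M] [Module Aᵐᵒᵖ M]
    (L : Submodule K M) (V : Submodule K A) (ε : ℝ) : Prop :=
  FiniteDimensional K L ∧ FiniteDimensional K (rLV K L V) ∧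
    (finrank K (rLV K L V) : ℝ) < (1 + ε) * (finrank K L : ℝ)

/-- The right `A`-module `M` is amenable. -/
def RModAmenable (A M : Type) [Ring A] [Algebra K A] [AddCommGroup M] [Module K M]
    [Module Aᵐᵒᵖ M] [IsScalarTower K Aᵐᵒᵖ M] : Prop :=
  ∀ V : Submodule K A, FiniteDimensional K V → ∀ ε : ℝ, 0 < ε →
    ∃ L : Submodule K M, RModInv K L V ε

/-- The right `A`-module `M` is exhaustively amenable. -/
def RModExhAmenable (A M : Type) [Ring A] [Algebra K A] [AddCommGroup M] [Module K M]
    [Module Aᵐᵒᵖ M] [IsScalarTower K Aᵐᵒᵖ M] : Prop :=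
  ∀ V : Submodule K A, FiniteDimensional K V → ∀ ε : ℝ, 0 < ε →
    ∀ W : Submodule K M, FiniteDimensional K W →
      ∃ L : Submodule K M, W ≤ L ∧ RModInv K L V ε

/-- For a left `A`-module `M`, the subspace `V·L`, spanned by `{v·ℓ : ℓ ∈ L, v ∈ V}`. -/
def lVL {A M : Type} [Ring A] [Algebra K A] [AddCommGroup M] [Module K M] [Module A M]
    (L : Submodule K M) (V : Submodule K A) : Submodule K M :=
  Submodule.span K {x : M | ∃ l ∈ L, ∃ v ∈ V, x = v • l}

/-- `L` is a `(V, ε)`-invariant subspace of the left `A`-module `M`. -/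
def LModInv {A M : Type} [Ring A] [Algebra K A] [AddCommGroup M] [Module K M] [Module A M]
    (L : Submodule K M) (V : Submodule K A) (ε : ℝ) : Prop :=
  FiniteDimensional K L ∧ FiniteDimensional K (lVL K L V) ∧
    (finrank K (lVL K L V) : ℝ) < (1 + ε) * (finrank K L : ℝ)

/-- The left `A`-module `M` is exhaustively amenable. -/
def LModExhAmenable (A M : Type) [Ring A] [Algebra K A] [AddCommGroup M] [Module K M]
    [Module A M] [IsScalarTower K A M] : Prop :=
  ∀ V : Submodule K A, FiniteDimensional K V → ∀ ε : ℝ, 0 < ε →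
    ∀ W : Submodule K M, FiniteDimensional K W →
      ∃ L : Submodule K M, W ≤ L ∧ LModInv K L V ε

/-- A Følner sequence for `A` as a right module over itself, with respect to the
generating subspace `V`. -/
def FolnerSeq {A : Type} [Ring A] [Algebra K A] (V : Submodule K A)
    (L : ℕ → Submodule K A) : Prop :=
  Monotone L ∧ (∀ n, FiniteDimensional K (L n)) ∧ (⨆ n, L n) = (⊤ : Submodule K A) ∧
    Tendsto (fun n => (finrank K (L n * V : Submodule K A) : ℝ) / (finrank K (L n) : ℝ))
      atTop (nhds 1)

/-- The isoperimetric profile of `A` with respect to `V`: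
`I(n) = inf {dim((W·V + W)/W) : dim W = n}`. -/
def isoProfile {A : Type} [Ring A] [Algebra K A] (V : Submodule K A) (n : ℕ) : ℕ :=
  sInf {k : ℕ | ∃ W : Submodule K A, FiniteDimensional K W ∧ finrank K W = n ∧
    FiniteDimensional K (W ⊔ W * V : Submodule K A) ∧
    k = finrank K (W ⊔ W * V : Submodule K A) - finrank K W}

end Amen

section Words

variable {σ : Type}

/-- The shift on bi-infinite words. -/
def shiftZ (s : ℤ → σ) : ℤ → σ := fun n => s (n + 1)

/-- The word `u` occurs in the bi-infinite word `s` at position `k`. -/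
def OccursAt (u : List σ) (s : ℤ → σ) (k : ℤ) : Prop :=
  ∀ i : Fin u.length, s (k + (i : ℕ)) = u.get i

/-- `u` is a (finite) factor of the bi-infinite word `s`. -/
def FactorZ (u : List σ) (s : ℤ → σ) : Prop := ∃ k : ℤ, OccursAt u s k

/-- `u` is a factor of the subshift `X`. -/
def FactorOfX (u : List σ) (X : Set (ℤ → σ)) : Prop := ∃ s ∈ X, FactorZ u s

/-- `s` is recurrent: every factor occurs at infinitely many positions. -/
def RecurrentZ (s : ℤ → σ) : Prop :=
  ∀ u : List σ, FactorZ u s → {k : ℤ | OccursAt u s k}.Infinite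

/-- `s` is uniformly recurrent: for every factor `u` there is `N` such that every
factor of `s` of length `N` contains an occurrence of `u`. -/
def UnifRecurrentZ (s : ℤ → σ) : Prop :=
  ∀ u : List σ, FactorZ u s → ∃ N : ℕ, ∀ v : List σ, FactorZ v s → v.length = N → u <:+: v

/-- `X ⊆ σ^ℤ` is a subshift: nonempty, closed and shift-invariant. -/
def IsSubshift [TopologicalSpace σ] (X : Set (ℤ → σ)) : Prop :=
  X.Nonempty ∧ IsClosed X ∧ ∀ s ∈ X, shiftZ s ∈ X

/-- `X` is a minimal subshift. -/
def IsMinimalSubshift [TopologicalSpace σ] (X : Set (ℤ → σ)) : Prop :=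
  IsSubshift X ∧
    ∀ Y : Set (ℤ → σ), Y ⊆ X → IsClosed Y → (∀ s ∈ Y, shiftZ s ∈ Y) → Y = ∅ ∨ Y = X

/-- `X` is a transitive subshift: some element has dense shift-orbit. -/
def IsTransitiveSubshift [TopologicalSpace σ] (X : Set (ℤ → σ)) : Prop :=
  IsSubshift X ∧ ∃ s ∈ X, closure {t : ℤ → σ | ∃ n : ℤ, t = fun m => s (m + n)} = X

/-- The word `u` occurs in the right-infinite word `s` at position `k`. -/
def OccursAtN (u : List σ) (s : ℕ → σ) (k : ℕ) : Prop :=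
  ∀ i : Fin u.length, s (k + (i : ℕ)) = u.get i

/-- `u` is a factor of the right-infinite word `s`. -/
def FactorN (u : List σ) (s : ℕ → σ) : Prop := ∃ k : ℕ, OccursAtN u s k

/-- A right-infinite word is uniformly recurrent. -/
def UnifRecurrentN (s : ℕ → σ) : Prop :=
  ∀ u : List σ, FactorN u s → ∃ N : ℕ, ∀ v : List σ, FactorN v s → v.length = N → u <:+: v

end Words

end Paper

namespace Paper

open Module

section AuxWrd
variable (K : Type) [Field K]

theorem wrd_mul {σ : Type} (w v : List σ) : wrd K (w ++ v) = wrd K w * wrd K v := by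
  unfold wrd; rw [← map_mul]; rfl

end AuxWrd

def enc {d : ℕ} : List (Fin d) → ℕ
  | [] => 0
  | a :: t => ((a : ℕ) + 1) * (d + 1) ^ t.length + enc t

theorem enc_lt {d : ℕ} (w : List (Fin d)) : enc w < (d + 1) ^ w.length := by
  induction w with
  | nil => simp [enc]
  | cons a t ih =>
    have ha : (a : ℕ) + 1 ≤ d := by have := a.isLt; omega
    have h2 : ((a : ℕ) + 1) * (d + 1) ^ t.length + enc t
        < ((a : ℕ) + 2) * (d + 1) ^ t.length := by nlinarith
    have h3 : ((a : ℕ) + 2) * (d + 1) ^ t.length ≤ (d + 1) * (d + 1) ^ t.length := by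
      have : (a : ℕ) + 2 ≤ d + 1 := by omega
      exact Nat.mul_le_mul_right _ this
    calc enc (a :: t) = ((a : ℕ) + 1) * (d + 1) ^ t.length + enc t := rfl
    _ < ((a : ℕ) + 2) * (d + 1) ^ t.length := h2
    _ ≤ (d + 1) * (d + 1) ^ t.length := h3
    _ = (d + 1) ^ (t.length + 1) := by ring
    _ = (d + 1) ^ (a :: t).length := by simp

theorem enc_pos {d : ℕ} (a : Fin d) (t : List (Fin d)) :
    (d + 1) ^ t.length ≤ enc (a :: t) := by
  have : 1 * (d + 1) ^ t.length ≤ ((a : ℕ) + 1) * (d + 1) ^ t.length :=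
    Nat.mul_le_mul_right _ (by omega)
  calc (d+1)^t.length = 1 * (d+1)^t.length := by ring
  _ ≤ ((a : ℕ) + 1) * (d + 1) ^ t.length := this
  _ ≤ enc (a :: t) := Nat.le_add_right _ _

theorem enc_append {d : ℕ} (w s : List (Fin d)) :
    enc (w ++ s) = enc w * (d + 1) ^ s.length + enc s := by
  induction w with
  | nil => simp [enc]
  | cons a t ih =>
    show ((a:ℕ)+1) * (d+1) ^ (t ++ s).length + enc (t ++ s) = _
    rw [ih, List.length_append, pow_add]
    show _ = (((a:ℕ)+1) * (d + 1) ^ t.length + enc t) * (d + 1) ^ s.length + enc s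
    ring

theorem enc_length_eq {d : ℕ} {w v : List (Fin d)} (h : enc w = enc v) :
    w.length = v.length := by
  rcases w with _ | ⟨a, t⟩ <;> rcases v with _ | ⟨b, u⟩
  · rfl
  · exfalso
    have h2 := enc_pos b u
    have h1 : (1:ℕ) ≤ (d+1)^u.length := Nat.one_le_pow _ _ (by omega)
    have h0 : (0:ℕ) = enc (b :: u) := h
    omega
  · exfalso
    have h2 := enc_pos a t
    have h1 : (1:ℕ) ≤ (d+1)^t.length := Nat.one_le_pow _ _ (by omega)
    have h0 : enc (a :: t) = 0 := h
    omega
  · by_contra hne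
    have hlt : t.length < u.length ∨ u.length < t.length := by
      simp only [List.length_cons] at hne ⊢
      omega
    rcases hlt with hlt | hlt
    · have h1 : enc (a :: t) < (d+1) ^ (t.length + 1) := enc_lt _
      have h2 : (d+1) ^ u.length ≤ enc (b :: u) := enc_pos b u
      have h3 : (d+1) ^ (t.length + 1) ≤ (d+1) ^ u.length :=
        Nat.pow_le_pow_right (by omega) (by omega)
      omega
    · have h1 : enc (b :: u) < (d+1) ^ (u.length + 1) := enc_lt _
      have h2 : (d+1) ^ t.length ≤ enc (a :: t) := enc_pos a t
      have h3 : (d+1) ^ (u.length + 1) ≤ (d+1) ^ t.length :=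
        Nat.pow_le_pow_right (by omega) (by omega)
      omega

theorem enc_injective {d : ℕ} : Function.Injective (enc (d := d)) := by
  intro w v h
  induction w generalizing v with
  | nil =>
    rcases v with _ | ⟨b, u⟩
    · rfl
    · exact absurd (enc_length_eq h) (by simp)
  | cons a t ih =>
    rcases v with _ | ⟨b, u⟩
    · exact absurd (enc_length_eq h) (by simp)
    · have hlen : t.length = u.length := by
        have := enc_length_eq h; simpa using this
      have ht := enc_lt t
      have hu := enc_lt u
      have he : ((a:ℕ)+1) * (d+1)^t.length + enc t = ((b:ℕ)+1) * (d+1)^u.length + enc u := h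
      rw [← hlen] at he hu
      have hab : a = b := by
        apply Fin.val_injective
        rcases Nat.lt_trichotomy (a:ℕ) (b:ℕ) with hl | hl | hl
        · exfalso; nlinarith
        · exact hl
        · exfalso; nlinarith
      subst hab
      have : enc t = enc u := by omega
      rw [ih this]


section BasisLayer

variable {K : Type} [Field K]
variable {σ : Type} {A : Type} [Ring A] [Algebra K A] (π : FreeAlg K σ →ₐ[K] A)

/-- good words -/
abbrev Gd : Type := {w : List σ // π (wrd K w) ≠ 0}

variable (hπ : MonomialPresentation K π)

theorem mul_wrd (w v : List σ) :
    π (wrd K w) * π (wrd K v) = π (wrd K (w ++ v)) := by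
  rw [wrd_mul, map_mul]

include hπ in
theorem good_indep : LinearIndependent K (fun w : Gd π => π (wrd K w.1)) := by
  classical
  rw [linearIndependent_iff]
  intro l hl
  ext w₀
  let φ : FreeAlg K σ →ₗ[K] K := Finsupp.lapply (FreeMonoid.ofList w₀.1) ∘ₗ
    (MonoidAlgebra.coeffLinearEquiv K (S := K) (M := FreeMonoid σ)).toLinearMap
  have φval : ∀ v : List σ,
      φ (wrd K v) = if FreeMonoid.ofList v = FreeMonoid.ofList w₀.1 then (1:K) else 0 := by
    intro v
    show (Finsupp.single (FreeMonoid.ofList v) (1:K)) (FreeMonoid.ofList w₀.1) = _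
    rw [Finsupp.single_apply]
  have hπl : π ((Finsupp.linearCombination K (fun w : Gd π => wrd K w.1)) l) = 0 :=
    (Finsupp.apply_linearCombination K π.toLinearMap _ l).trans hl
  have hmem := (hπ.2 _).mp hπl
  have hker : Submodule.span K {m : FreeAlg K σ | ∃ w : List σ, m = wrd K w ∧ π (wrd K w) = 0}
      ≤ LinearMap.ker φ := by
    rw [Submodule.span_le]
    rintro m ⟨w, rfl, hw⟩
    simp only [SetLike.mem_coe, LinearMap.mem_ker]
    rw [φval, if_neg]
    intro hcon
    have hww : w = w₀.1 := FreeMonoid.ofList.injective hcon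
    rw [hww] at hw
    exact w₀.2 hw
  have hφ : (Finsupp.linearCombination K (fun w : Gd π => φ (wrd K w.1))) l = 0 :=
    ((Finsupp.apply_linearCombination K φ _ l).symm).trans (hker hmem)
  rw [Finsupp.linearCombination_apply] at hφ
  rw [Finsupp.sum_eq_single w₀ ?h1 (fun _ => by simp)] at hφ
  · have hone : φ (wrd K w₀.1) = 1 := by rw [φval, if_pos rfl]
    rw [hone, smul_eq_mul, mul_one] at hφ
    simpa using hφ
  case h1 =>
    intro b _ hbne
    have hz : φ (wrd K b.1) = 0 := by
      rw [φval, if_neg]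
      intro hcon
      exact hbne (Subtype.ext (FreeMonoid.ofList.injective hcon))
    rw [hz, smul_zero]

include hπ in
theorem good_span : ⊤ ≤ Submodule.span K (Set.range fun w : Gd π => π (wrd K w.1)) := by
  intro x hx
  clear hx
  obtain ⟨y, rfl⟩ := hπ.1 x
  induction y using MonoidAlgebra.induction_linear with
  | zero => simp
  | add f g hf hg => rw [map_add]; exact Submodule.add_mem _ hf hg
  | single m c =>
    have hmc : (MonoidAlgebra.single m c : FreeAlg K σ) = c • wrd K (FreeMonoid.toList m) := by
      show MonoidAlgebra.single m c = c • MonoidAlgebra.single m (1:K)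
      rw [MonoidAlgebra.smul_single', mul_one]
    rw [hmc, map_smul]
    by_cases h : π (wrd K (FreeMonoid.toList m)) = 0
    · rw [h, smul_zero]; exact Submodule.zero_mem _
    · exact Submodule.smul_mem _ _ (Submodule.subset_span ⟨⟨_, h⟩, rfl⟩)

/-- The monomial basis of a monomial algebra. -/
def gb : Basis (Gd π) K A := Basis.mk (good_indep π hπ) (good_span π hπ)

theorem gb_apply (w : Gd π) : gb π hπ w = π (wrd K w.1) := Basis.mk_apply _ _ _

end BasisLayer

section CoordLayer
variable {K : Type} [Field K]
variable {σ : Type} {A : Type} [Ring A] [Algebra K A] (π : FreeAlg K σ →ₐ[K] A)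
variable (hπ : MonomialPresentation K π)

theorem mul_repr (x : A) (s : List σ) :
    x * π (wrd K s) = (((gb π hπ).repr x).sum fun w c => c • π (wrd K (w.1 ++ s))) := by
  conv_lhs => rw [← (gb π hπ).linearCombination_repr x]
  rw [Finsupp.linearCombination_apply, Finsupp.sum_mul]
  apply Finsupp.sum_congr
  intro w _
  rw [smul_mul_assoc, gb_apply, mul_wrd]

theorem repr_mul_wrd (x : A) (s : List σ) :
    (gb π hπ).repr (x * π (wrd K s)) =
      (((gb π hπ).repr x).sum fun w c => c • (gb π hπ).repr (π (wrd K (w.1 ++ s)))) := by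
  rw [mul_repr π hπ x s, map_finsuppSum]
  exact Finsupp.sum_congr fun w _ => by rw [map_smul]

theorem repr_wrd_good (w : Gd π) :
    (gb π hπ).repr (π (wrd K w.1)) = Finsupp.single w 1 := by
  rw [← gb_apply π hπ w, (gb π hπ).repr_self]

theorem support_mul_wrd (x : A) (s : List σ) :
    ∀ t ∈ ((gb π hπ).repr (x * π (wrd K s))).support,
      ∃ w ∈ ((gb π hπ).repr x).support, t.1 = w.1 ++ s := by
  classical
  intro t ht
  rw [repr_mul_wrd π hπ x s] at ht
  have := Finsupp.support_sum ht
  rw [Finset.mem_biUnion] at this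
  obtain ⟨w, hw, hmem⟩ := this
  refine ⟨w, hw, ?_⟩
  by_cases h : π (wrd K (w.1 ++ s)) = 0
  · rw [h, map_zero, smul_zero] at hmem
    simp at hmem
  · rw [repr_wrd_good π hπ ⟨w.1 ++ s, h⟩] at hmem
    have := Finsupp.support_smul hmem
    rw [Finsupp.support_single_ne_zero _ (one_ne_zero)] at this
    rw [Finset.mem_singleton] at this
    rw [this]

theorem repr_mul_apply_top (x : A) (s : List σ) (ℓ : Gd π)
    (hgood : π (wrd K (ℓ.1 ++ s)) ≠ 0) :
    (gb π hπ).repr (x * π (wrd K s)) ⟨ℓ.1 ++ s, hgood⟩ = (gb π hπ).repr x ℓ := by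
  classical
  rw [repr_mul_wrd π hπ x s, Finsupp.sum_apply]
  rw [Finsupp.sum_eq_single ℓ ?h1 (fun _ => by simp)]
  · rw [repr_wrd_good π hπ ⟨ℓ.1 ++ s, hgood⟩, Finsupp.smul_single', mul_one,
      Finsupp.single_apply, if_pos rfl]
  case h1 =>
    intro b _ hbne
    by_cases h : π (wrd K (b.1 ++ s)) = 0
    · rw [h, map_zero, smul_zero]; rfl
    · rw [repr_wrd_good π hπ ⟨b.1 ++ s, h⟩, Finsupp.smul_single', mul_one,
        Finsupp.single_apply, if_neg]
      intro hcon
      apply hbne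
      have : b.1 ++ s = ℓ.1 ++ s := congrArg Subtype.val hcon
      exact Subtype.ext (List.append_cancel_right this)

theorem exists_support_bound (L : Submodule K A) (hfd : FiniteDimensional K L) :
    ∃ T : Finset (Gd π), ∀ x ∈ L, ((gb π hπ).repr x).support ⊆ T := by
  classical
  obtain ⟨S, hSfin, hspan⟩ := Submodule.fg_def.mp (Module.Finite.iff_fg.mp hfd)
  refine ⟨hSfin.toFinset.biUnion (fun a => ((gb π hπ).repr a).support), ?_⟩
  intro x hx
  rw [← hspan] at hx
  induction hx using Submodule.span_induction with
  | mem a ha =>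
    intro t ht
    exact Finset.mem_biUnion.mpr ⟨a, hSfin.mem_toFinset.mpr ha, ht⟩
  | zero => simp
  | add a b _ _ iha ihb =>
    intro t ht
    rw [map_add] at ht
    rcases Finset.mem_union.mp (Finsupp.support_add ht) with h | h
    · exact iha h
    · exact ihb h
  | smul c a _ iha =>
    intro t ht
    rw [map_smul] at ht
    exact iha (Finsupp.support_smul ht)

/-- Vectors with distinct dominant coordinates are linearly independent. -/
theorem indep_of_distinct_leads (e : List σ → ℕ) (he : Function.Injective e)
    {ι : Type} (y : ι → A) (m : ι → Gd π) (hminj : Function.Injective m)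
    (hc : ∀ i, (gb π hπ).repr (y i) (m i) ≠ 0)
    (hb : ∀ i, ∀ t ∈ ((gb π hπ).repr (y i)).support, e t.1 ≤ e (m i).1) :
    LinearIndependent K y := by
  classical
  rw [linearIndependent_iff']
  intro s g hsum i hi
  by_contra hgi
  have hFne : (s.filter fun j => g j ≠ 0).Nonempty := ⟨i, Finset.mem_filter.mpr ⟨hi, hgi⟩⟩
  obtain ⟨j, hjF, hjmax⟩ := Finset.exists_max_image _ (fun j => e (m j).1) hFne
  obtain ⟨hjs, hgj⟩ := Finset.mem_filter.mp hjF
  have h0 : (gb π hπ).repr (∑ i ∈ s, g i • y i) (m j) = 0 := by rw [hsum]; simp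
  rw [map_sum, Finsupp.coe_finset_sum, Finset.sum_apply] at h0
  rw [Finset.sum_eq_single_of_mem j hjs ?hz] at h0
  · rw [map_smul, Finsupp.smul_apply, smul_eq_mul] at h0
    exact hgj (by
      rcases mul_eq_zero.mp h0 with h | h
      · exact h
      · exact absurd h (hc j))
  case hz =>
    intro b hbs hbj
    rw [map_smul, Finsupp.smul_apply, smul_eq_mul]
    by_cases hgb : g b = 0
    · rw [hgb, zero_mul]
    · have hmem : b ∈ s.filter fun j => g j ≠ 0 := Finset.mem_filter.mpr ⟨hbs, hgb⟩
      have hle : e (m b).1 ≤ e (m j).1 := hjmax b hmem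
      by_cases hrep : (gb π hπ).repr (y b) (m j) = 0
      · rw [hrep, mul_zero]
      · exfalso
        have hmemsupp : m j ∈ ((gb π hπ).repr (y b)).support := Finsupp.mem_support_iff.mpr hrep
        have hge : e (m j).1 ≤ e (m b).1 := hb b _ hmemsupp
        have : (m b).1 = (m j).1 := he (le_antisymm hle hge)
        exact hbj (hminj (Subtype.ext this))

end CoordLayer



section Double
open Module Submodule
variable {K : Type} [Field K]
variable {d : ℕ} {A : Type} [Ring A] [Algebra K A] (π : FreeAlg K (Fin d) →ₐ[K] A)
variable (hπ : MonomialPresentation K π)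

/-- The span of the length-`D` monomials. -/
def lenV (D : ℕ) : Submodule K A :=
  Submodule.span K ((fun w => π (wrd K w)) '' {w : List (Fin d) | w.length = D})

theorem lenV_fd (D : ℕ) : FiniteDimensional K (lenV π D : Submodule K A) :=
  FiniteDimensional.span_of_finite K (((List.finite_length_eq (Fin d) D)).image _)

include hπ in
theorem double {D : ℕ}
    (hD : ∀ u : A, IsMono K π u → u ≠ 0 →
      ¬ {v : A | IsMonoLen K π D v ∧ u * v ≠ 0}.Subsingleton)
    (L : Submodule K A) (hLfd : FiniteDimensional K L)
    (hLV : FiniteDimensional K (L * lenV π D : Submodule K A)) :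
    2 * finrank K L ≤ finrank K (L * lenV π D : Submodule K A) := by
  classical
  obtain ⟨T, hT⟩ := exists_support_bound π hπ L hLfd
  set B := gb π hπ with hB
  -- the set of leads of L
  set P : Gd π → Prop := fun w => ∃ x ∈ L, w ∈ (B.repr x).support ∧
    ∀ t ∈ (B.repr x).support, enc t.1 ≤ enc w.1 with hP
  set TL : Finset (Gd π) := T.filter P with hTL
  -- step 1 : finrank L ≤ TL.card
  have step1 : finrank K L ≤ TL.card := by
    let f : L →ₗ[K] (TL → K) :=
      LinearMap.pi fun t => (Finsupp.lapply t.1) ∘ₗ (B.repr : A →ₗ[K] (Gd π →₀ K)) ∘ₗ L.subtype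
    have hinj : Function.Injective f := by
      rw [← LinearMap.ker_eq_bot, LinearMap.ker_eq_bot']
      intro x hx
      by_contra hxne
      have hx0 : (x : A) ≠ 0 := fun h => hxne (Subtype.ext h)
      have hsupp : ((B.repr x).support).Nonempty := by
        rw [Finsupp.support_nonempty_iff]
        intro h
        exact hx0 (by simpa using congrArg B.repr.symm h)
      obtain ⟨w, hwmem, hwmax⟩ := Finset.exists_max_image _ (fun t => enc t.1) hsupp
      have hwP : P w := ⟨x, x.2, hwmem, hwmax⟩
      have hwT : w ∈ TL := Finset.mem_filter.mpr ⟨hT x x.2 hwmem, hwP⟩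
      have := congrFun hx ⟨w, hwT⟩
      simp only [f, LinearMap.pi_apply, LinearMap.comp_apply, Pi.zero_apply] at this
      exact (Finsupp.mem_support_iff.mp hwmem) this
    have := LinearMap.finrank_le_finrank_of_injective hinj
    rwa [Module.finrank_pi, Fintype.card_coe] at this
  -- step 2 : choose witnesses
  have key : ∀ w : {w : Gd π // w ∈ TL}, ∃ (x : A) (s₁ s₂ : List (Fin d)),
      x ∈ L ∧ w.1 ∈ (B.repr x).support ∧
      (∀ t ∈ (B.repr x).support, enc t.1 ≤ enc w.1.1) ∧
      s₁.length = D ∧ s₂.length = D ∧ s₁ ≠ s₂ ∧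
      π (wrd K (w.1.1 ++ s₁)) ≠ 0 ∧ π (wrd K (w.1.1 ++ s₂)) ≠ 0 := by
    rintro ⟨w, hw⟩
    obtain ⟨x, hxL, hxmem, hxmax⟩ := (Finset.mem_filter.mp hw).2
    have hnt := hD (π (wrd K w.1)) ⟨w.1, rfl⟩ w.2
    rw [Set.not_subsingleton_iff] at hnt
    obtain ⟨v₁, ⟨⟨s₁, hs₁len, rfl⟩, hv₁⟩, v₂, ⟨⟨s₂, hs₂len, rfl⟩, hv₂⟩, hne⟩ := hnt
    rw [mul_wrd] at hv₁ hv₂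
    refine ⟨x, s₁, s₂, hxL, hxmem, hxmax, hs₁len, hs₂len, ?_, hv₁, hv₂⟩
    rintro rfl
    exact hne rfl
  choose xw s₁ s₂ hxL hxmem hxmax hs₁len hs₂len hsne hg₁ hg₂ using key
  -- the independent family
  let sel : {w : Gd π // w ∈ TL} → Bool → List (Fin d) := fun w b => if b then s₁ w else s₂ w
  have hsellen : ∀ w b, (sel w b).length = D := by
    intro w b; cases b
    · exact hs₂len w
    · exact hs₁len w
  have hselg : ∀ w b, π (wrd K (w.1.1 ++ sel w b)) ≠ 0 := by
    intro w b; cases b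
    · exact hg₂ w
    · exact hg₁ w
  let m : {w : Gd π // w ∈ TL} × Bool → Gd π := fun p => ⟨p.1.1.1 ++ sel p.1 p.2, hselg p.1 p.2⟩
  let y : {w : Gd π // w ∈ TL} × Bool → A := fun p => xw p.1 * π (wrd K (sel p.1 p.2))
  have hminj : Function.Injective m := by
    rintro ⟨w, b⟩ ⟨w', b'⟩ h
    have h1 : w.1.1 ++ sel w b = w'.1.1 ++ sel w' b' := congrArg Subtype.val h
    have h2 : (sel w b).length = (sel w' b').length := by rw [hsellen, hsellen]
    obtain ⟨hww, hss⟩ := List.append_inj' h1 h2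
    have hww' : w = w' := Subtype.ext (Subtype.ext hww)
    subst hww'
    cases b <;> cases b'
    · rfl
    · exact ((hsne w) (hss.symm : s₁ w = s₂ w)).elim
    · exact ((hsne w) (hss : s₁ w = s₂ w)).elim
    · rfl
  have hindep : LinearIndependent K y := by
    apply indep_of_distinct_leads π hπ enc enc_injective y m hminj
    · intro p
      show B.repr (xw p.1 * π (wrd K (sel p.1 p.2))) (m p) ≠ 0
      rw [show m p = ⟨p.1.1.1 ++ sel p.1 p.2, hselg p.1 p.2⟩ from rfl]
      rw [repr_mul_apply_top π hπ]
      exact Finsupp.mem_support_iff.mp (hxmem p.1)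
    · intro p t ht
      obtain ⟨w', hw', heq⟩ := support_mul_wrd π hπ _ _ t ht
      show enc t.1 ≤ enc (p.1.1.1 ++ sel p.1 p.2)
      rw [heq, enc_append, enc_append]
      have := hxmax p.1 w' hw'
      have hmul : enc w'.1 * (d + 1) ^ (sel p.1 p.2).length ≤
          enc p.1.1.1 * (d + 1) ^ (sel p.1 p.2).length :=
        Nat.mul_le_mul_right _ this
      omega
  -- push into L * lenV
  have hyV : ∀ p, y p ∈ (L * lenV π D : Submodule K A) := by
    intro p
    exact mul_mem_mul (hxL p.1) (subset_span ⟨sel p.1 p.2, hsellen p.1 p.2, rfl⟩)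
  let y' : {w : Gd π // w ∈ TL} × Bool → (L * lenV π D : Submodule K A) :=
    fun p => ⟨y p, hyV p⟩
  have hindep' : LinearIndependent K y' :=
    hindep.of_comp (L * lenV π D : Submodule K A).subtype
  have hcard := hindep'.fintype_card_le_finrank
  rw [Fintype.card_prod, Fintype.card_bool, Fintype.card_coe] at hcard
  omega

include hπ in
theorem one_implies_two (ham : RightSelfAmenable K A) (D : ℕ) :
    ∃ u : A, IsMono K π u ∧ u ≠ 0 ∧
      {v : A | IsMonoLen K π D v ∧ u * v ≠ 0}.Subsingleton := by
  by_contra hcon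
  push_neg at hcon
  have hD : ∀ u : A, IsMono K π u → u ≠ 0 →
      ¬ {v : A | IsMonoLen K π D v ∧ u * v ≠ 0}.Subsingleton := by
    intro u h1 h2
    exact Set.not_subsingleton_iff.mpr (hcon u h1 h2)
  obtain ⟨L, hL1, hL2, hL3⟩ := ham (lenV π D) (lenV_fd π D) (1/2) (by norm_num)
  have h2 := double π hπ hD L hL1 hL2
  have h0 : (0:ℝ) ≤ (finrank K L : ℝ) := Nat.cast_nonneg _
  have h2' : (2 * finrank K L : ℝ) ≤ (finrank K (L * lenV π D : Submodule K A) : ℝ) := by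
    exact_mod_cast h2
  linarith

end Double


section Msp
open Module Submodule
variable {K : Type} [Field K]
variable {d : ℕ} {A : Type} [Ring A] [Algebra K A] (π : FreeAlg K (Fin d) →ₐ[K] A)
variable (hπ : MonomialPresentation K π)

/-- Monomial subspace spanned by a finite set of words. -/
def msp (S : Finset (List (Fin d))) : Submodule K A :=
  Submodule.span K ((fun w => π (wrd K w)) '' ↑S)

theorem msp_mono {S S' : Finset (List (Fin d))} (h : S ⊆ S') : msp π S ≤ msp π S' :=
  Submodule.span_mono (Set.image_mono h)

theorem msp_fd (S : Finset (List (Fin d))) : FiniteDimensional K (msp π S : Submodule K A) :=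
  FiniteDimensional.span_of_finite K (S.finite_toSet.image _)

theorem msp_sup (S S' : Finset (List (Fin d))) :
    (msp π S ⊔ msp π S' : Submodule K A) = msp π (S ∪ S') := by
  classical
  unfold msp
  rw [← Submodule.span_union, ← Set.image_union, Finset.coe_union]

theorem finrank_msp_le (S : Finset (List (Fin d))) :
    finrank K (msp π S : Submodule K A) ≤ S.card := by
  classical
  have h1 : ((fun w => π (wrd K w)) '' ↑S) = ↑(S.image fun w => π (wrd K w)) := by
    rw [Finset.coe_image]
  rw [msp, h1]
  exact le_trans (finrank_span_finset_le_card _) (Finset.card_image_le)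

include hπ in
theorem mono_inj : Function.Injective (fun w : Gd π => π (wrd K w.1)) :=
  (good_indep π hπ).injective

include hπ in
theorem finrank_msp_eq (S : Finset (List (Fin d))) (hgood : ∀ w ∈ S, π (wrd K w) ≠ 0) :
    finrank K (msp π S : Submodule K A) = S.card := by
  classical
  have hsub : ((fun w => π (wrd K w)) '' ↑S) ⊆
      Set.range (fun w : Gd π => π (wrd K w.1)) := by
    rintro x ⟨w, hw, rfl⟩
    exact ⟨⟨w, hgood w hw⟩, rfl⟩
  have hindep : LinearIndependent K
      (Subtype.val : ((fun w => π (wrd K w)) '' ↑S : Set A) → A) :=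
    ((good_indep π hπ).linearIndepOn_id).mono hsub
  have hfin : Fintype ((fun w => π (wrd K w)) '' ↑S : Set A) :=
    Set.Finite.fintype (S.finite_toSet.image _)
  rw [msp, finrank_span_set_eq_card hindep]
  rw [Set.toFinset_image]
  rw [Finset.toFinset_coe]
  apply Finset.card_image_of_injOn
  intro w hw w' hw' heq
  have : (⟨w, hgood w hw⟩ : Gd π) = ⟨w', hgood w' hw'⟩ := mono_inj π hπ heq
  exact congrArg Subtype.val this

/-- Multiplying a monomial span by the generating subspace. -/
theorem msp_mul_genV (S : Finset (List (Fin d))) :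
    (msp π S * genV K π : Submodule K A) =
      msp π (S ∪ S.biUnion fun w => Finset.univ.image fun i : Fin d => w ++ [i]) := by
  classical
  apply le_antisymm
  · rw [msp, genV, Submodule.span_mul_span, Submodule.span_le]
    rintro x hx
    rw [Set.mem_mul] at hx
    obtain ⟨m, hm, g, hg, rfl⟩ := hx
    obtain ⟨w, hw, rfl⟩ := hm
    rcases hg with hg | ⟨i, rfl⟩
    · rw [Set.mem_singleton_iff] at hg
      subst hg
      rw [mul_one]
      exact subset_span ⟨w, by simp [hw], rfl⟩
    · rw [mul_wrd]
      apply subset_span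
      refine ⟨w ++ [i], ?_, rfl⟩
      simp only [Finset.coe_union, Set.mem_union, Finset.mem_coe, Finset.mem_biUnion]
      right
      exact ⟨w, hw, Finset.mem_image.mpr ⟨i, Finset.mem_univ _, rfl⟩⟩
  · rw [msp, Submodule.span_le]
    rintro x ⟨w, hw, rfl⟩
    simp only [Finset.coe_union, Set.mem_union, Finset.mem_coe, Finset.mem_biUnion] at hw
    rcases hw with hw | ⟨w', hw', hmem⟩
    · show π (wrd K w) ∈ (msp π S * genV K π : Submodule K A)
      have h1 : π (wrd K w) = π (wrd K w) * 1 := (mul_one _).symm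
      rw [h1]
      exact mul_mem_mul (subset_span ⟨w, hw, rfl⟩)
        (subset_span (Set.mem_union_left _ rfl))
    · rw [Finset.mem_image] at hmem
      obtain ⟨i, _, rfl⟩ := hmem
      show π (wrd K (w' ++ [i])) ∈ (msp π S * genV K π : Submodule K A)
      rw [← mul_wrd]
      exact mul_mem_mul (subset_span ⟨w', hw', rfl⟩)
        (subset_span (Set.mem_union_right _ ⟨i, rfl⟩))

end Msp

section GenVGeneral
open Module Submodule
variable {K : Type} [Field K]
variable {σ : Type} {A : Type} [Ring A] [Algebra K A] (π : FreeAlg K σ →ₐ[K] A)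

theorem one_mem_genV : (1 : A) ∈ genV K π :=
  subset_span (Set.mem_union_left _ rfl)

theorem le_mul_genV (L : Submodule K A) : L ≤ L * genV K π := by
  intro x hx
  have : x * 1 ∈ L * genV K π := mul_mem_mul hx (one_mem_genV π)
  rwa [mul_one] at this

end GenVGeneral

section Prolong
open Module Submodule
variable {K : Type} [Field K]
variable {σ : Type} {A : Type} [Ring A] [Algebra K A] (π : FreeAlg K σ →ₐ[K] A)

theorem prefix_good {w v : List σ} (h : π (wrd K (w ++ v)) ≠ 0) : π (wrd K w) ≠ 0 := by
  intro h0
  rw [← mul_wrd, h0, zero_mul] at h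
  exact h rfl

theorem prolong_one (hprol : RightProlongable K π) {w : List σ} (h : π (wrd K w) ≠ 0) :
    ∃ i : σ, π (wrd K (w ++ [i])) ≠ 0 := by
  obtain ⟨v, hvne, hv⟩ := hprol (π (wrd K w)) ⟨w, rfl⟩ h
  rw [mul_wrd] at hv
  rcases v with _ | ⟨i, t⟩
  · exact absurd rfl hvne
  · refine ⟨i, ?_⟩
    apply prefix_good (v := t)
    rwa [List.append_assoc, List.singleton_append]

theorem prolong_len (hprol : RightProlongable K π) {w : List σ} (h : π (wrd K w) ≠ 0)
    (k : ℕ) : ∃ t : List σ, t.length = k ∧ π (wrd K (w ++ t)) ≠ 0 := by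
  induction k with
  | zero => exact ⟨[], rfl, by rwa [List.append_nil]⟩
  | succ k ih =>
    obtain ⟨t, htlen, ht⟩ := ih
    obtain ⟨i, hi⟩ := prolong_one π hprol ht
    refine ⟨t ++ [i], by simp [htlen], ?_⟩
    rwa [← List.append_assoc]

end Prolong


section Tube
open Module Submodule
variable {K : Type} [Field K]
variable {d : ℕ} {A : Type} [Ring A] [Algebra K A] (π : FreeAlg K (Fin d) →ₐ[K] A)
variable (hπ : MonomialPresentation K π)

/-- words of length at most `k` -/
def lenSet (d k : ℕ) : Finset (List (Fin d)) := (List.finite_length_le (Fin d) k).toFinset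

theorem mem_lenSet {k : ℕ} {w : List (Fin d)} : w ∈ lenSet d k ↔ w.length ≤ k :=
  Set.Finite.mem_toFinset _

theorem lenSet_mono {k k' : ℕ} (h : k ≤ k') : lenSet d k ⊆ lenSet d k' := by
  intro w hw
  rw [mem_lenSet] at hw ⊢
  omega

theorem Ek_mul_genV (k : ℕ) :
    (msp π (lenSet d k) * genV K π : Submodule K A) ≤ msp π (lenSet d (k+1)) := by
  rw [msp_mul_genV]
  apply msp_mono
  intro w hw
  rcases Finset.mem_union.mp hw with hw | hw
  · exact lenSet_mono (Nat.le_succ k) hw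
  · rw [Finset.mem_biUnion] at hw
    obtain ⟨w', hw', hmem⟩ := hw
    rw [Finset.mem_image] at hmem
    obtain ⟨i, _, rfl⟩ := hmem
    rw [mem_lenSet] at hw' ⊢
    simp only [List.length_append, List.length_singleton]
    omega

include hπ in
theorem iSup_Ek_top : (⨆ k, (msp π (lenSet d k) : Submodule K A)) = ⊤ := by
  apply le_antisymm le_top
  refine le_trans (good_span π hπ) (Submodule.span_le.mpr ?_)
  rintro x ⟨w, rfl⟩
  apply Submodule.mem_iSup_of_mem w.1.length
  exact subset_span ⟨w.1, mem_lenSet.mpr le_rfl, rfl⟩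

variable (a e : List (Fin d)) (D : ℕ)

/-- The tube over the word `a` with profile `e`. -/
def TubS : Finset (List (Fin d)) := (Finset.range (D+1)).image fun j => a ++ e.take j

variable (he : e.length = D) (hae : π (wrd K (a ++ e)) ≠ 0)

include he hae in
theorem tub_good : ∀ w ∈ TubS a e D, π (wrd K w) ≠ 0 := by
  intro w hw
  rw [TubS, Finset.mem_image] at hw
  obtain ⟨j, _, rfl⟩ := hw
  apply prefix_good (v := e.drop j)
  rwa [List.append_assoc, List.take_append_drop]

include he in
theorem tub_card : (TubS a e D).card = D + 1 := by
  rw [TubS, Finset.card_image_of_injOn, Finset.card_range]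
  intro j hj j' hj' heq
  simp only [Finset.coe_range, Set.mem_Iio] at hj hj'
  have h1 : e.take j = e.take j' := List.append_cancel_left heq
  have h2 := congrArg List.length h1
  rw [List.length_take, List.length_take, he] at h2
  omega

include he hae hπ in
theorem tub_finrank : finrank K (msp π (TubS a e D) : Submodule K A) = D + 1 := by
  rw [finrank_msp_eq π hπ _ (tub_good π a e D he hae), tub_card a e D he]

variable (huniq : ∀ s : List (Fin d), s.length ≤ D → π (wrd K (a ++ s)) ≠ 0 →
  s = e.take s.length)

include he huniq in
theorem tub_mul_genV :
    (msp π (TubS a e D) * genV K π : Submodule K A) ≤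
      msp π (TubS a e D ∪ Finset.univ.image fun i : Fin d => a ++ e ++ [i]) := by
  classical
  rw [msp_mul_genV, msp, Submodule.span_le]
  rintro x ⟨w, hw, rfl⟩
  simp only [Finset.coe_union, Set.mem_union, Finset.mem_coe, Finset.mem_biUnion] at hw
  rcases hw with hw | ⟨w', hw', hmem⟩
  · exact subset_span ⟨w, by simp [hw], rfl⟩
  · rw [Finset.mem_image] at hmem
    obtain ⟨i, _, rfl⟩ := hmem
    rw [TubS, Finset.mem_image] at hw'
    obtain ⟨j, hj, rfl⟩ := hw'
    rw [Finset.mem_range] at hj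
    by_cases hz : π (wrd K ((a ++ e.take j) ++ [i])) = 0
    · show (fun w => π (wrd K w)) ((a ++ e.take j) ++ [i]) ∈ _
      simp only [hz]
      exact Submodule.zero_mem _
    · by_cases hjD : j < D
      · -- the extended word is again in the tube
        have hlen : (e.take j ++ [i]).length = j + 1 := by
          rw [List.length_append, List.length_take, List.length_singleton, he]
          omega
        have hgood : π (wrd K (a ++ (e.take j ++ [i]))) ≠ 0 := by
          rwa [← List.append_assoc]
        have := huniq (e.take j ++ [i]) (by omega) hgood
        rw [hlen] at this
        apply subset_span
        refine ⟨a ++ e.take (j+1), ?_, ?_⟩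
        · apply Finset.mem_coe.mpr
          apply Finset.mem_union_left
          rw [TubS, Finset.mem_image]
          exact ⟨j+1, Finset.mem_range.mpr (by omega), rfl⟩
        · rw [← this, ← List.append_assoc]
      · -- j = D : we fall off the end of the tube
        have hjD' : j = D := by omega
        have htk : e.take j = e := List.take_of_length_le (by omega)
        apply subset_span
        refine ⟨a ++ e ++ [i], ?_, ?_⟩
        · apply Finset.mem_coe.mpr
          apply Finset.mem_union_right
          rw [Finset.mem_image]
          exact ⟨i, Finset.mem_univ _, rfl⟩
        · rw [htk]

end Tube


section Folner
open Module Submodule Filter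
variable {K : Type} [Field K]
variable {d : ℕ} {A : Type} [Ring A] [Algebra K A] (π : FreeAlg K (Fin d) →ₐ[K] A)
variable (hπ : MonomialPresentation K π)

theorem ratio_helper (aa b c n : ℕ) (h1 : 0 < b) (h2 : aa ≤ b + c) (h3 : (n+1) * c ≤ b) :
    (aa : ℝ) / b ≤ 1 + 1/(n+1) := by
  have hb : (0:ℝ) < b := by exact_mod_cast h1
  have hn : (0:ℝ) < (n:ℝ) + 1 := by positivity
  rw [div_le_iff₀ hb]
  have hc : (c:ℝ) ≤ (b:ℝ)/((n:ℝ)+1) := by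
    rw [le_div_iff₀ hn]
    have h3' : ((n:ℝ)+1) * c ≤ b := by exact_mod_cast h3
    linarith
  have h2' : (aa:ℝ) ≤ (b:ℝ) + c := by exact_mod_cast h2
  have hexp : ((1:ℝ) + 1/((n:ℝ)+1)) * b = b + b/((n:ℝ)+1) := by
    field_simp
  rw [hexp]
  have : (b:ℝ)/((n:ℝ)+1) = b * (1/((n:ℝ)+1)) := by ring
  linarith

include hπ in
theorem two_implies_three (hprol : RightProlongable K π)
    (h2 : ∀ D : ℕ, ∃ u : A, IsMono K π u ∧ u ≠ 0 ∧
      {v : A | IsMonoLen K π D v ∧ u * v ≠ 0}.Subsingleton) :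
    ∃ L : ℕ → Submodule K A, (∀ n, MonomialSubspace K π (L n)) ∧
      FolnerSeq K (genV K π) L := by
  classical
  -- extract tube data for every D
  have main : ∀ D : ℕ, ∃ a e : List (Fin d), π (wrd K a) ≠ 0 ∧ e.length = D ∧
      π (wrd K (a ++ e)) ≠ 0 ∧
      (∀ s : List (Fin d), s.length ≤ D → π (wrd K (a ++ s)) ≠ 0 → s = e.take s.length) := by
    intro D
    obtain ⟨u, ⟨aw, rfl⟩, hune, huss⟩ := h2 D
    obtain ⟨e, helen, hegood⟩ := prolong_len π hprol hune D
    refine ⟨aw, e, hune, helen, hegood, ?_⟩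
    intro s hslen hsgood
    obtain ⟨t, htlen, htgood⟩ := prolong_len π hprol hsgood (D - s.length)
    have hstlen : (s ++ t).length = D := by
      rw [List.length_append]; omega
    have hstg : π (wrd K (aw ++ (s ++ t))) ≠ 0 := by rwa [← List.append_assoc]
    have h1 : π (wrd K (s ++ t)) ∈ {v : A | IsMonoLen K π D v ∧ π (wrd K aw) * v ≠ 0} := by
      refine ⟨⟨s ++ t, hstlen, rfl⟩, ?_⟩
      rwa [mul_wrd]
    have h2' : π (wrd K e) ∈ {v : A | IsMonoLen K π D v ∧ π (wrd K aw) * v ≠ 0} := by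
      refine ⟨⟨e, helen, rfl⟩, ?_⟩
      rwa [mul_wrd]
    have heq := huss h1 h2'
    have hstne : π (wrd K (s ++ t)) ≠ 0 := fun h0 => by
      rw [← mul_wrd, h0, mul_zero] at hstg; exact hstg rfl
    have hene : π (wrd K e) ≠ 0 := fun h0 => by
      rw [← mul_wrd, h0, mul_zero] at hegood; exact hegood rfl
    have hw : (⟨s ++ t, hstne⟩ : Gd π) = ⟨e, hene⟩ := mono_inj π hπ heq
    have hweq : s ++ t = e := congrArg Subtype.val hw
    rw [← hweq, List.take_left]
  choose aW eW haW heW haeW huniqW using main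
  -- the recursive scale function
  let C : ℕ → ℕ := fun m => finrank K (msp π (lenSet d (m + 1)) : Submodule K A) + d + 1
  let k : ℕ → ℕ := fun n => Nat.rec 0
    (fun n kn => max (kn + 1) ((aW ((n+1) * C kn)).length + ((n+1) * C kn) + 1)) n
  let D : ℕ → ℕ := fun n => (n+1) * C (k n)
  have hk_succ : ∀ n, k (n+1) = max (k n + 1) ((aW (D n)).length + D n + 1) := fun n => rfl
  let T : ℕ → Finset (List (Fin d)) := fun n => TubS (aW (D n)) (eW (D n)) (D n)
  let L : ℕ → Submodule K A := fun n => msp π (lenSet d (k n)) ⊔ msp π (T n)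
  have hLfd : ∀ n, FiniteDimensional K (L n) := by
    intro n
    have := msp_fd π (A := A) (lenSet d (k n))
    have := msp_fd π (A := A) (T n)
    exact Submodule.finiteDimensional_sup _ _
  -- tube words are short
  have htubshort : ∀ n, T n ⊆ lenSet d (k (n+1)) := by
    intro n w hw
    have hw2 : w ∈ (Finset.range (D n + 1)).image
        (fun j => aW (D n) ++ (eW (D n)).take j) := hw
    rw [Finset.mem_image] at hw2
    obtain ⟨j, hj, rfl⟩ := hw2
    rw [Finset.mem_range] at hj
    rw [mem_lenSet, List.length_append, List.length_take, heW, hk_succ]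
    have : min j (D n) ≤ D n := min_le_right _ _
    have h2 := le_max_right (k n + 1) ((aW (D n)).length + D n + 1)
    omega
  have hkmono : ∀ n, k n + 1 ≤ k (n+1) := by
    intro n; rw [hk_succ]; exact le_max_left _ _
  have hkge : ∀ n, n ≤ k n := by
    intro n
    induction n with
    | zero => exact Nat.zero_le _
    | succ n ih => have := hkmono n; omega
  have hLmono : Monotone L := by
    apply monotone_nat_of_le_succ
    intro n
    apply sup_le
    · exact le_trans (msp_mono π (lenSet_mono (by have := hkmono n; omega))) le_sup_left
    · exact le_trans (msp_mono π (htubshort n)) le_sup_left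
  have hLtop : (⨆ n, L n) = ⊤ := by
    apply le_antisymm le_top
    rw [← iSup_Ek_top π hπ]
    apply iSup_mono
    intro n
    exact le_trans (msp_mono π (lenSet_mono (hkge n))) le_sup_left
  -- dimension estimates
  have hdim : ∀ n, finrank K (L n * genV K π : Submodule K A) ≤
      finrank K (L n) + (C (k n) - 1) ∧ D n + 1 ≤ finrank K (L n) ∧
      finrank K (L n) ≤ finrank K (L n * genV K π : Submodule K A) ∧
      FiniteDimensional K (L n * genV K π : Submodule K A) := by
    intro n
    haveI := hLfd n
    have hTgood := tub_good π (aW (D n)) (eW (D n)) (D n) (heW (D n)) (haeW (D n))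
    have hTdim : finrank K (msp π (T n) : Submodule K A) = D n + 1 :=
      tub_finrank π hπ _ _ _ (heW (D n)) (haeW (D n))
    have hTleL : D n + 1 ≤ finrank K (L n) := by
      rw [← hTdim]
      exact Submodule.finrank_mono le_sup_right
    -- the product decomposes
    have hprod : (L n * genV K π : Submodule K A) =
        msp π (lenSet d (k n)) * genV K π ⊔ msp π (T n) * genV K π := by
      show ((msp π (lenSet d (k n)) ⊔ msp π (T n)) * genV K π : Submodule K A) = _
      rw [← Submodule.add_eq_sup, ← Submodule.add_eq_sup, right_distrib]
    have hE : (msp π (lenSet d (k n)) * genV K π : Submodule K A) ≤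
        msp π (lenSet d (k n + 1)) := Ek_mul_genV π _
    have hT : (msp π (T n) * genV K π : Submodule K A) ≤
        msp π (T n ∪ Finset.univ.image fun i : Fin d => aW (D n) ++ eW (D n) ++ [i]) :=
      tub_mul_genV π _ _ _ (heW (D n)) (huniqW (D n))
    have hle : (L n * genV K π : Submodule K A) ≤
        msp π (lenSet d (k n + 1)) ⊔
          msp π (T n ∪ Finset.univ.image fun i : Fin d => aW (D n) ++ eW (D n) ++ [i]) := by
      rw [hprod]
      exact sup_le_sup hE hT
    have hfd2 : FiniteDimensional K (msp π (lenSet d (k n + 1)) ⊔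
        msp π (T n ∪ Finset.univ.image fun i : Fin d => aW (D n) ++ eW (D n) ++ [i]) :
        Submodule K A) := by
      have := msp_fd π (A := A) (lenSet d (k n + 1))
      have := msp_fd π (A := A)
        (T n ∪ Finset.univ.image fun i : Fin d => aW (D n) ++ eW (D n) ++ [i])
      exact Submodule.finiteDimensional_sup _ _
    haveI := hfd2
    have hfdLV : FiniteDimensional K (L n * genV K π : Submodule K A) :=
      Submodule.finiteDimensional_of_le hle
    haveI := hfdLV
    refine ⟨?_, hTleL, ?_, hfdLV⟩
    · -- upper bound
      have h1 : finrank K (L n * genV K π : Submodule K A) ≤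
          finrank K (msp π (lenSet d (k n + 1)) : Submodule K A) +
          finrank K (msp π (T n ∪ Finset.univ.image
            fun i : Fin d => aW (D n) ++ eW (D n) ++ [i]) : Submodule K A) := by
        have := msp_fd π (A := A) (lenSet d (k n + 1))
        have := msp_fd π (A := A)
          (T n ∪ Finset.univ.image fun i : Fin d => aW (D n) ++ eW (D n) ++ [i])
        have hsum := Submodule.finrank_sup_add_finrank_inf_eq
          (msp π (lenSet d (k n + 1)) : Submodule K A)
          (msp π (T n ∪ Finset.univ.image
            fun i : Fin d => aW (D n) ++ eW (D n) ++ [i]) : Submodule K A)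
        have hmono := Submodule.finrank_mono hle
        omega
      have h2 : finrank K (msp π (T n ∪ Finset.univ.image
          fun i : Fin d => aW (D n) ++ eW (D n) ++ [i]) : Submodule K A) ≤
          (D n + 1) + d := by
        refine le_trans (finrank_msp_le π _) ?_
        refine le_trans (Finset.card_union_le _ _) ?_
        have hc1 : (T n).card = D n + 1 := tub_card _ _ _ (heW (D n))
        have hc2 : (Finset.univ.image
            fun i : Fin d => aW (D n) ++ eW (D n) ++ [i]).card ≤ d := by
          refine le_trans Finset.card_image_le ?_
          simp
        omega
      have hCn : C (k n) = finrank K (msp π (lenSet d (k n + 1)) : Submodule K A) + d + 1 :=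
        rfl
      omega
    · exact Submodule.finrank_mono (le_mul_genV π (L n))
  refine ⟨L, ?_, hLmono, hLfd, hLtop, ?_⟩
  · -- each L n is a monomial subspace
    intro n
    refine ⟨↑(lenSet d (k n) ∪ T n), ?_⟩
    show L n = msp π (lenSet d (k n) ∪ T n)
    rw [← msp_sup]
  · -- the Folner ratio tends to 1
    have hub : ∀ n, (finrank K (L n * genV K π : Submodule K A) : ℝ) / (finrank K (L n)) ≤
        1 + 1/((n:ℝ)+1) := by
      intro n
      obtain ⟨h1, h2, h3, h4⟩ := hdim n
      have hb : 0 < finrank K (L n) := by omega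
      have hDn : (n+1) * (C (k n) - 1) ≤ finrank K (L n) := by
        have hD : D n = (n+1) * C (k n) := rfl
        have hmul : (n+1) * (C (k n) - 1) ≤ (n+1) * C (k n) :=
          Nat.mul_le_mul_left _ (Nat.sub_le _ _)
        omega
      have := ratio_helper (finrank K (L n * genV K π : Submodule K A))
        (finrank K (L n)) (C (k n) - 1) n hb h1 hDn
      exact_mod_cast this
    have hlb : ∀ n, (1:ℝ) ≤
        (finrank K (L n * genV K π : Submodule K A) : ℝ) / (finrank K (L n)) := by
      intro n
      obtain ⟨h1, h2, h3, h4⟩ := hdim n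
      have hb : (0:ℝ) < (finrank K (L n) : ℝ) := by
        have : 0 < finrank K (L n) := by omega
        exact_mod_cast this
      rw [le_div_iff₀ hb, one_mul]
      exact_mod_cast h3
    have htend : Tendsto (fun n : ℕ => 1 + 1/((n:ℝ)+1)) atTop (nhds 1) := by
      have := tendsto_one_div_add_atTop_nhds_zero_nat (𝕜 := ℝ)
      have h := tendsto_const_nhds (x := (1:ℝ)) (f := atTop (α := ℕ))
      simpa using h.add this
    exact tendsto_of_tendsto_of_tendsto_of_le_of_le tendsto_const_nhds htend hlb hub

end Folner


section Growth
open Module Submodule Pointwise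
variable {K : Type} [Field K]
variable {A : Type} [Ring A] [Algebra K A]

theorem exists_finset_span (p : Submodule K A) [FiniteDimensional K p] :
    ∃ S : Finset A, Submodule.span K (↑S : Set A) = p ∧ S.card = finrank K p := by
  classical
  let b := finBasis K p
  have hinj : Function.Injective (fun i => ((b i : A))) := fun i j hij =>
    b.injective (Subtype.val_injective hij)
  refine ⟨Finset.univ.image fun i => (b i : A), ?_, ?_⟩
  · rw [Finset.coe_image, Finset.coe_univ, Set.image_univ]
    have h0 : Set.range (fun i => (b i : A)) = ⇑p.subtype '' Set.range ⇑b := by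
      rw [← Set.range_comp]; rfl
    rw [h0, Submodule.span_image, b.span_eq, Submodule.map_top, Submodule.range_subtype]
  · rw [Finset.card_image_of_injective _ hinj, Finset.card_univ, Fintype.card_fin]

theorem fd_mul (p q : Submodule K A) [FiniteDimensional K p] [FiniteDimensional K q] :
    FiniteDimensional K (p * q : Submodule K A) ∧
      finrank K (p * q : Submodule K A) ≤ finrank K p * finrank K q := by
  classical
  obtain ⟨S, hS, hScard⟩ := exists_finset_span p
  obtain ⟨T, hT, hTcard⟩ := exists_finset_span q
  have h1 : (p * q : Submodule K A) = Submodule.span K (↑(S * T) : Set A) := by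
    rw [← hS, ← hT, Submodule.span_mul_span, Finset.coe_mul]
  constructor
  · rw [h1]; exact FiniteDimensional.span_of_finite K (S * T).finite_toSet
  · rw [h1, ← hScard, ← hTcard]
    exact le_trans (finrank_span_finset_le_card _) Finset.card_mul_le

theorem exists_compl_finrank {M N : Submodule K A} (h : M ≤ N) [FiniteDimensional K N] :
    ∃ B : Submodule K A, B ≤ N ∧ M ⊔ B = N ∧
      finrank K M + finrank K B = finrank K N := by
  classical
  let M' : Submodule K N := M.comap N.subtype
  obtain ⟨q, hq⟩ := Submodule.exists_isCompl M'
  refine ⟨q.map N.subtype, Submodule.map_subtype_le _ _, ?_, ?_⟩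
  · have h1 : M' ⊔ q = ⊤ := hq.sup_eq_top
    have h2 := congrArg (Submodule.map N.subtype) h1
    rw [Submodule.map_sup, Submodule.map_top, Submodule.range_subtype,
      Submodule.map_comap_subtype, inf_of_le_right h] at h2
    exact h2
  · have h3 := Submodule.finrank_add_eq_of_isCompl hq
    have h4 : finrank K M' = finrank K M := by
      have := Submodule.finrank_map_subtype_eq N M'
      rw [Submodule.map_comap_subtype, inf_of_le_right h] at this
      omega
    have h5 := Submodule.finrank_map_subtype_eq N q
    omega

theorem one_le_pow {V : Submodule K A} (hV : 1 ∈ V) (k : ℕ) :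
    (1 : Submodule K A) ≤ V ^ k := by
  induction k with
  | zero => rw [pow_zero]
  | succ k ih =>
    rw [pow_succ]
    calc (1 : Submodule K A) = 1 * 1 := (one_mul _).symm
    _ ≤ V ^ k * V := mul_le_mul' ih (Submodule.one_le.mpr hV)

theorem le_mul_of_one_mem {L V : Submodule K A} (hV : 1 ∈ V) : L ≤ L * V := by
  intro x hx
  have : x * 1 ∈ L * V := Submodule.mul_mem_mul hx hV
  rwa [mul_one] at this

/-- The growth lemma: the dimension of `L·V^k` is controlled by that of `L·V`. -/
theorem growth (L V : Submodule K A) [FiniteDimensional K L] [FiniteDimensional K V]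
    (hV : 1 ∈ V) (k : ℕ) :
    FiniteDimensional K (L * V ^ k : Submodule K A) ∧
      finrank K (L * V ^ k : Submodule K A) ≤ finrank K L +
        (finrank K (L * V : Submodule K A) - finrank K L) * (finrank K V + 1) ^ k := by
  induction k with
  | zero =>
    rw [pow_zero, mul_one]
    exact ⟨inferInstance, by omega⟩
  | succ k ih =>
    obtain ⟨ihfd, ihrk⟩ := ih
    haveI := ihfd
    haveI : FiniteDimensional K (L * V : Submodule K A) := (fd_mul L V).1
    have hLN : L ≤ (L * V ^ k : Submodule K A) :=
      calc L = L * 1 := (mul_one L).symm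
      _ ≤ L * V ^ k := mul_le_mul' le_rfl (one_le_pow hV k)
    obtain ⟨Bc, hBle, hBsup, hBrank⟩ := exists_compl_finrank hLN
    haveI : FiniteDimensional K Bc := Submodule.finiteDimensional_of_le hBle
    have hsplit : (L * V ^ (k+1) : Submodule K A) = L * V ⊔ Bc * V := by
      rw [pow_succ, ← mul_assoc, ← hBsup, ← Submodule.add_eq_sup (L * V),
        ← Submodule.add_eq_sup L, right_distrib]
    haveI hfdBV : FiniteDimensional K (Bc * V : Submodule K A) := (fd_mul Bc V).1
    have hfd : FiniteDimensional K (L * V ^ (k+1) : Submodule K A) := by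
      rw [hsplit]; exact Submodule.finiteDimensional_sup _ _
    refine ⟨hfd, ?_⟩
    haveI := hfd
    have hr1 : finrank K (L * V ^ (k+1) : Submodule K A) ≤
        finrank K (L * V : Submodule K A) + finrank K (Bc * V : Submodule K A) := by
      have := Submodule.finrank_sup_add_finrank_inf_eq
        (L * V : Submodule K A) (Bc * V : Submodule K A)
      rw [hsplit]
      omega
    have hr2 : finrank K (Bc * V : Submodule K A) ≤ finrank K Bc * finrank K V :=
      (fd_mul Bc V).2
    set f := finrank K L with hf
    set g := finrank K (L * V : Submodule K A) with hg
    set c := finrank K V with hc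
    set N := finrank K (L * V ^ k : Submodule K A) with hNr
    have hBc : finrank K Bc = N - f := by omega
    rw [hBc] at hr2
    have hfg : f ≤ g := Submodule.finrank_mono (le_mul_of_one_mem hV)
    have hpow : (c+1) ^ (k+1) = (c+1)^k + c * (c+1)^k := by rw [pow_succ]; ring
    have hpk : 1 ≤ (c+1)^k := Nat.one_le_pow _ _ (by omega)
    have key : (N - f) * c ≤ (g - f) * ((c+1)^k * c) := by
      have h1 : N - f ≤ (g - f) * (c+1)^k := by omega
      calc (N - f) * c ≤ (g - f) * (c+1)^k * c := Nat.mul_le_mul_right _ h1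
      _ = (g - f) * ((c+1)^k * c) := by ring
    have expand : (g - f) * (c+1)^(k+1) = (g - f) * (c+1)^k + (g - f) * ((c+1)^k * c) := by
      rw [hpow]; ring
    have hgf : g ≤ f + (g - f) * (c+1)^k := by
      have : (g - f) * 1 ≤ (g - f) * (c+1)^k := Nat.mul_le_mul_left _ hpk
      omega
    omega

end Growth


section ThreeFour
open Module Submodule Filter
variable {K : Type} [Field K]
variable {σ : Type} {A : Type} [Ring A] [Algebra K A] (π : FreeAlg K σ →ₐ[K] A)
variable (hπ : MonomialPresentation K π)

theorem genV_fd [Finite σ] : FiniteDimensional K (genV K π : Submodule K A) :=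
  FiniteDimensional.span_of_finite K ((Set.finite_singleton 1).union (Set.finite_range _))

theorem mem_genV_pow (w : List σ) : π (wrd K w) ∈ ((genV K π) ^ w.length : Submodule K A) := by
  induction w using List.reverseRecOn with
  | nil =>
    have h1 : π (wrd K ([] : List σ)) = 1 := map_one π
    rw [h1, List.length_nil, pow_zero, Submodule.one_eq_span]
    exact subset_span rfl
  | append_singleton w i ih =>
    rw [← mul_wrd, List.length_append, List.length_singleton, pow_succ]
    exact Submodule.mul_mem_mul ih (subset_span (Set.mem_union_right _ ⟨i, rfl⟩))

theorem exists_bound_finset {P : ℕ → Submodule K A} (hm : Monotone P) (S : Finset A)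
    (h : ∀ x ∈ S, ∃ n, x ∈ P n) : ∃ n, (↑S : Set A) ⊆ P n := by
  classical
  induction S using Finset.induction with
  | empty => exact ⟨0, by simp⟩
  | @insert a s ha ih =>
    obtain ⟨n, hn⟩ := ih fun x hxs => h x (Finset.mem_insert_of_mem hxs)
    obtain ⟨n', hn'⟩ := h a (Finset.mem_insert_self a s)
    refine ⟨max n n', ?_⟩
    rw [Finset.coe_insert, Set.insert_subset_iff]
    exact ⟨hm (le_max_right n n') hn',
      fun x hxs => hm (le_max_left n n') (hn hxs)⟩

theorem genV_pow_mono : Monotone (fun k => ((genV K π) ^ k : Submodule K A)) := by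
  apply monotone_nat_of_le_succ
  intro k
  show ((genV K π) ^ k : Submodule K A) ≤ (genV K π) ^ (k + 1)
  rw [pow_succ]
  exact le_mul_of_one_mem (one_mem_genV π)

include hπ in
theorem exists_pow_genV (V : Submodule K A) (hV : FiniteDimensional K V) :
    ∃ k, V ≤ ((genV K π) ^ k : Submodule K A) := by
  classical
  have hall : ∀ x : A, ∃ k, x ∈ ((genV K π) ^ k : Submodule K A) := by
    intro x
    have hx : x ∈ Submodule.span K (Set.range fun w : Gd π => π (wrd K w.1)) :=
      good_span π hπ Submodule.mem_top
    induction hx using Submodule.span_induction with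
    | mem a ha =>
      obtain ⟨w, rfl⟩ := ha
      exact ⟨w.1.length, mem_genV_pow π w.1⟩
    | zero => exact ⟨0, Submodule.zero_mem _⟩
    | add a b _ _ iha ihb =>
      obtain ⟨k1, h1⟩ := iha
      obtain ⟨k2, h2⟩ := ihb
      exact ⟨max k1 k2, Submodule.add_mem _ (genV_pow_mono π (le_max_left _ _) h1)
        (genV_pow_mono π (le_max_right _ _) h2)⟩
    | smul c a _ iha =>
      obtain ⟨k1, h1⟩ := iha
      exact ⟨k1, Submodule.smul_mem _ _ h1⟩
  haveI := hV
  obtain ⟨S, hS, _⟩ := exists_finset_span V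
  obtain ⟨k, hk⟩ := exists_bound_finset (genV_pow_mono π) S fun x _ => hall x
  exact ⟨k, by rw [← hS]; exact Submodule.span_le.mpr hk⟩

include hπ in
theorem three_implies_four [Finite σ]
    (h3 : ∃ L : ℕ → Submodule K A, (∀ n, MonomialSubspace K π (L n)) ∧
      FolnerSeq K (genV K π) L) :
    RightSelfExhAmenable K A := by
  classical
  obtain ⟨L, _, hmono, hfd, htop, htend⟩ := h3
  intro V hVfd ε hε W hWfd
  haveI := hVfd
  haveI := hWfd
  haveI : FiniteDimensional K (genV K π : Submodule K A) := genV_fd π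
  obtain ⟨k, hVk⟩ := exists_pow_genV π hπ V hVfd
  set c := finrank K (genV K π : Submodule K A) with hc
  set Ck := (c + 1) ^ k with hCkdef
  have hCk1 : 1 ≤ Ck := Nat.one_le_pow _ _ (by omega)
  have hCkR : (0:ℝ) < (Ck:ℝ) := by exact_mod_cast hCk1
  have hWm : ∃ m, W ≤ L m := by
    obtain ⟨S, hS, _⟩ := exists_finset_span W
    have hmem : ∀ x ∈ S, ∃ n, x ∈ L n := by
      intro x _
      have hx : x ∈ (⨆ n, L n) := by rw [htop]; exact Submodule.mem_top
      exact (Submodule.mem_iSup_of_chain ⟨L, hmono⟩ x).mp hx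
    obtain ⟨m, hm⟩ := exists_bound_finset hmono S hmem
    exact ⟨m, by rw [← hS]; exact Submodule.span_le.mpr hm⟩
  obtain ⟨m, hWle⟩ := hWm
  set η : ℝ := min (1/2) (ε / (Ck + 1)) with hηdef
  have hηpos : 0 < η := lt_min (by norm_num) (by positivity)
  obtain ⟨N, hN⟩ := Metric.tendsto_atTop.mp htend η hηpos
  set n := max N m with hndef
  have hdist := hN n (le_max_left _ _)
  rw [Real.dist_eq] at hdist
  haveI := hfd n
  haveI : FiniteDimensional K (L n * genV K π : Submodule K A) := (fd_mul _ _).1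
  set f := finrank K (L n) with hf
  set g := finrank K (L n * genV K π : Submodule K A) with hg
  have hfg : f ≤ g := Submodule.finrank_mono (le_mul_of_one_mem (one_mem_genV π))
  have hηhalf : η ≤ 1/2 := min_le_left _ _
  have hf0 : 0 < f := by
    by_contra h0
    have hfz : (f:ℝ) = 0 := by exact_mod_cast (by omega : f = 0)
    rw [hfz, div_zero] at hdist
    have h1 : |(0:ℝ) - 1| = 1 := by norm_num
    rw [h1] at hdist
    linarith
  have hfR : (0:ℝ) < f := by exact_mod_cast hf0
  have hub : (g:ℝ)/f - 1 < η := lt_of_le_of_lt (le_abs_self _) hdist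
  have hgub : (g:ℝ) < (1 + η) * f := by
    have h1 : (g:ℝ)/f < 1 + η := by linarith
    calc (g:ℝ) = (g:ℝ)/f * f := by field_simp
    _ < (1 + η) * f := by
        exact mul_lt_mul_of_pos_right h1 hfR
  obtain ⟨hfdk, hrk⟩ := growth (L n) (genV K π) (one_mem_genV π) k
  haveI := hfdk
  have hLnV : (L n * V : Submodule K A) ≤ L n * (genV K π) ^ k :=
    mul_le_mul' le_rfl hVk
  haveI hfdLnV : FiniteDimensional K (L n * V : Submodule K A) :=
    Submodule.finiteDimensional_of_le hLnV
  have hrank : finrank K (L n * V : Submodule K A) ≤ f + (g - f) * Ck :=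
    le_trans (Submodule.finrank_mono hLnV) hrk
  -- real arithmetic
  have hηCk : η * Ck < ε := by
    have h1 : η * (Ck + 1) ≤ ε := by
      have h2 : η ≤ ε / (Ck + 1) := min_le_right _ _
      rw [← le_div_iff₀ (by positivity : (0:ℝ) < (Ck:ℝ) + 1)]
      exact h2
    nlinarith
  have hδ : ((g:ℝ) - f) * Ck < ε * f := by
    have hA : ((g:ℝ) - f) * Ck < η * f * Ck :=
      mul_lt_mul_of_pos_right (by linarith) hCkR
    have hB : η * Ck * f < ε * f := mul_lt_mul_of_pos_right hηCk hfR
    have hC : η * f * Ck = η * Ck * f := by ring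
    linarith
  have hcast : (((g - f) * Ck : ℕ) : ℝ) = ((g:ℝ) - f) * (Ck:ℝ) := by
    push_cast [Nat.cast_sub hfg]
    ring
  refine ⟨L n, le_trans hWle (hmono (le_max_right N m)), hfd n, hfdLnV, ?_⟩
  have hcast2 : (finrank K (L n * V : Submodule K A) : ℝ) ≤ (f:ℝ) + ((g:ℝ) - f) * Ck := by
    have := hrank
    have h1 : (finrank K (L n * V : Submodule K A) : ℝ) ≤ ((f + (g - f) * Ck : ℕ) : ℝ) := by
      exact_mod_cast this
    rw [Nat.cast_add, hcast] at h1
    exact h1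
  calc (finrank K (L n * V : Submodule K A) : ℝ) ≤ (f:ℝ) + ((g:ℝ) - f) * Ck := hcast2
  _ < (f:ℝ) + ε * f := by linarith
  _ = (1 + ε) * f := by ring

end ThreeFour



/-- Theorem: combinatorial characterization of amenability of right
prolongable monomial algebras. For a right prolongable monomial algebra `A` on generators
`x_1, …, x_d` over a field `K`, the following are equivalent:
(1) `A` is amenable as a right module over itself;
(2) for every `D ∈ ℕ` there is a nonzero monomial `u` of `A` with at most one length-`D`
monomial `v` such that `u * v ≠ 0`;
(3) `A` has a Følner sequence (with respect to `span {1, x_1, …, x_d}`) consisting of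
subspaces spanned by monomials;
(4) `A` is exhaustively amenable as a right module over itself. -/

theorem stmt0 (K : Type) [Field K] (d : ℕ) (hd : 1 ≤ d)
    (A : Type) [Ring A] [Algebra K A] (π : FreeAlg K (Fin d) →ₐ[K] A)
    (hπ : MonomialPresentation K π) (hprol : RightProlongable K π) :
    [ RightSelfAmenable K A,
      ∀ D : ℕ, ∃ u : A, IsMono K π u ∧ u ≠ 0 ∧
        {v : A | IsMonoLen K π D v ∧ u * v ≠ 0}.Subsingleton,
      ∃ L : ℕ → Submodule K A, (∀ n, MonomialSubspace K π (L n)) ∧ FolnerSeq K (genV K π) L,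
      RightSelfExhAmenable K A ].TFAE := by
  tfae_have 1 → 2 := fun h1 => one_implies_two π hπ h1
  tfae_have 2 → 3 := fun h2 => two_implies_three π hπ hprol h2
  tfae_have 3 → 4 := fun h3 => three_implies_four π hπ h3
  tfae_have 4 → 1 := by
    intro h4 V hV ε hε
    obtain ⟨L, _, hL⟩ := h4 V hV ε hε ⊥ inferInstance
    exact ⟨L, hL⟩
  tfae_finish

end Paper
end
end

section
/- Let K be a field and let A be a right prolongable monomial algebra on generators x_1,…,x_d over K such that for every D ∈ ℕ there exists a nonzero monomial u of A with at most one monomial v of length D satisfying uv ≠ 0. Then for every finite-dimensional generating subspace V ≤ A with 1 ∈ V there exists a constant C such that I_{A,V}(n) ≤ C for all n ≥ 1; that is, the isoperimetric profile of A is asymptotically constant. -/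
noncomputable section

namespace Paper

open Module


section Aux
variable {K : Type} [Field K] {σ : Type} {A : Type} [Ring A] [Algebra K A]

lemma wrd_append (a b : List σ) : wrd K (a ++ b) = wrd K a * wrd K b := by
  unfold wrd; rw [← map_mul]; rfl

lemma wrd_nil : wrd K ([] : List σ) = 1 := map_one (MonoidAlgebra.of K (FreeMonoid σ))

lemma wrd_single (w : List σ) : wrd K w = MonoidAlgebra.single (FreeMonoid.ofList w) (1 : K) := rfl

lemma msingle_mem_supported {s : Set (FreeMonoid σ)} {x : FreeMonoid σ} (h : x ∈ s) :
    MonoidAlgebra.single x (1 : K) ∈ MonoidAlgebra.supported K K s := by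
  rw [MonoidAlgebra.mem_supported, MonoidAlgebra.coeff_single]
  intro y hy
  rw [Finset.mem_coe, Finsupp.mem_support_single] at hy
  exact hy.1 ▸ h

lemma support_zero (π : FreeAlg K σ →ₐ[K] A) (hπ : MonomialPresentation K π)
    {a : FreeAlg K σ} (ha : π a = 0) :
    ∀ x ∈ a.coeff.support, π (MonoidAlgebra.single x (1 : K)) = 0 := by
  have h := (hπ.2 a).mp ha
  have hle : Submodule.span K {m : FreeAlg K σ | ∃ w : List σ, m = wrd K w ∧ π (wrd K w) = 0}
      ≤ MonoidAlgebra.supported K K {x : FreeMonoid σ | π (MonoidAlgebra.single x (1 : K)) = 0} := by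
    rw [Submodule.span_le]
    rintro m ⟨w, rfl, hw⟩
    rw [wrd_single]
    exact msingle_mem_supported (by rw [Set.mem_setOf_eq, ← wrd_single]; exact hw)
  have h2 := MonoidAlgebra.mem_supported.mp (hle h)
  intro x hx
  exact h2 hx

lemma wrd_inj (π : FreeAlg K σ →ₐ[K] A) (hπ : MonomialPresentation K π)
    {w w' : List σ} (h : π (wrd K w) = π (wrd K w')) (h0 : π (wrd K w) ≠ 0) : w = w' := by
  by_contra hne
  have hx : FreeMonoid.ofList w' ≠ FreeMonoid.ofList w :=
    fun hh => hne (FreeMonoid.ofList.injective hh.symm)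
  have hz : π (wrd K w - wrd K w') = 0 := by rw [map_sub, h, sub_self]
  have hmem : FreeMonoid.ofList w ∈ (wrd K w - wrd K w').coeff.support := by
    rw [Finsupp.mem_support_iff, wrd_single, wrd_single, MonoidAlgebra.coeff_sub,
      MonoidAlgebra.coeff_single, MonoidAlgebra.coeff_single, Finsupp.sub_apply,
      Finsupp.single_eq_same, Finsupp.single_eq_of_ne hx.symm]
    simp
  have hs := support_zero π hπ hz (FreeMonoid.ofList w) hmem
  exact h0 (by rw [wrd_single]; exact hs)

lemma li_of_words (π : FreeAlg K σ →ₐ[K] A) (hπ : MonomialPresentation K π)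
    {ι : Type} (q : ι → List σ) (hinj : Function.Injective q)
    (h0 : ∀ i, π (wrd K (q i)) ≠ 0) :
    LinearIndependent K (fun i => π (wrd K (q i))) := by
  have hg : LinearIndependent K (fun i => (wrd K (q i) : FreeAlg K σ)) := by
    have hb := (MonoidAlgebra.basis (FreeMonoid σ) K).linearIndependent
    exact hb.comp (fun i => FreeMonoid.ofList (q i))
      (fun i j hh => hinj (FreeMonoid.ofList.injective hh))
  have hd : Disjoint (Submodule.span K (Set.range fun i => (wrd K (q i) : FreeAlg K σ)))
      (LinearMap.ker π.toLinearMap) := by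
    rw [Submodule.disjoint_def]
    intro a ha hker
    have h1 : (a.coeff.support : Set (FreeMonoid σ)) ⊆ Set.range (fun i => FreeMonoid.ofList (q i)) := by
      have hsp : Submodule.span K (Set.range fun i => (wrd K (q i) : FreeAlg K σ)) ≤
          MonoidAlgebra.supported K K (Set.range fun i => FreeMonoid.ofList (q i)) := by
        rw [Submodule.span_le]; rintro m ⟨i, rfl⟩
        show wrd K (q i) ∈ _
        rw [wrd_single]
        exact msingle_mem_supported ⟨i, rfl⟩
      exact MonoidAlgebra.mem_supported.mp (hsp ha)
    have hker' : π a = 0 := by simpa using hker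
    rw [← MonoidAlgebra.coeff_eq_zero, ← Finsupp.support_eq_empty, Finset.eq_empty_iff_forall_notMem]
    intro x hx
    obtain ⟨i, hi⟩ := h1 hx
    have hi' : FreeMonoid.ofList (q i) = x := hi
    exact h0 i (by rw [wrd_single, hi']; exact support_zero π hπ hker' x hx)
  exact hg.map hd

end Aux

/-- constant isoperimetric profile. Let `A` be a right prolongable
monomial algebra over a field `K` such that for every `D ∈ ℕ` there is a nonzero monomial
`u` of `A` with at most one length-`D` monomial `v` satisfying `u * v ≠ 0`. Then for every
finite-dimensional generating subspace `V ≤ A` with `1 ∈ V` the isoperimetric profile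
`I_{A,V}` is bounded by a constant. -/
theorem stmt3 (K : Type) [Field K] (d : ℕ) (hd : 1 ≤ d)
    (A : Type) [Ring A] [Algebra K A] (π : FreeAlg K (Fin d) →ₐ[K] A)
    (hπ : MonomialPresentation K π) (hprol : RightProlongable K π)
    (hcond : ∀ D : ℕ, ∃ u : A, IsMono K π u ∧ u ≠ 0 ∧
      {v : A | IsMonoLen K π D v ∧ u * v ≠ 0}.Subsingleton) :
    ∀ V : Submodule K A, FiniteDimensional K V → (1 : A) ∈ V →
      Algebra.adjoin K (V : Set A) = ⊤ →
      ∃ C : ℕ, ∀ n : ℕ, 1 ≤ n → isoProfile K V n ≤ C := by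
  intro V hVfd hV1 hadj
  classical
  -- the filtration by spans of monomials of bounded length
  set ME : ℕ → Submodule K A := fun E =>
    Submodule.span K {a : A | ∃ w : List (Fin d), w.length ≤ E ∧ a = π (wrd K w)} with hME
  have hmono : Monotone ME := by
    intro E E' hEE'
    apply Submodule.span_mono
    rintro a ⟨w, hw, rfl⟩
    exact ⟨w, hw.trans hEE', rfl⟩
  have htop : ∀ a : A, ∃ E, a ∈ ME E := by
    intro a
    obtain ⟨f, rfl⟩ := hπ.1 a
    induction f using MonoidAlgebra.induction with
    | zero => exact ⟨0, by rw [map_zero]; exact zero_mem _⟩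
    | single_add x b f hx hb ih =>
      obtain ⟨E1, hE1⟩ := ih
      refine ⟨max (FreeMonoid.toList x).length E1, ?_⟩
      rw [map_add]
      refine add_mem ?_ (hmono (le_max_right _ _) hE1)
      have hxb : (MonoidAlgebra.single x b : FreeAlg K (Fin d)) = b • wrd K (FreeMonoid.toList x) := by
        rw [wrd_single, FreeMonoid.ofList_toList, MonoidAlgebra.smul_single', mul_one]
      rw [hxb, map_smul]
      exact Submodule.smul_mem _ _
        (Submodule.subset_span ⟨FreeMonoid.toList x, le_max_left _ _, rfl⟩)
  -- V is contained in some ME E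
  obtain ⟨E, hVE⟩ : ∃ E, V ≤ ME E := by
    obtain ⟨s, hs⟩ := (Submodule.fg_iff_finiteDimensional V).mpr hVfd
    have hss : ∀ t : Finset A, ∃ E, (t : Set A) ⊆ (ME E : Set A) := by
      intro t
      induction t using Finset.induction with
      | empty => exact ⟨0, by simp⟩
      | @insert x t' hxt ih =>
        obtain ⟨E1, hE1⟩ := ih
        obtain ⟨E2, hE2⟩ := htop x
        refine ⟨max E2 E1, ?_⟩
        rw [Finset.coe_insert, Set.insert_subset_iff]
        exact ⟨hmono (le_max_left _ _) hE2,
          hE1.trans (SetLike.coe_subset_coe.mpr (hmono (le_max_right _ _)))⟩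
    obtain ⟨E, hE⟩ := hss s
    exact ⟨E, by rw [← hs, Submodule.span_le]; exact hE⟩
  refine ⟨E, ?_⟩
  intro n hn
  obtain ⟨u, ⟨qw, rfl⟩, hu0, hsub⟩ := hcond (n + E)
  -- every nonzero monomial extends by one letter
  have prol : ∀ r : List (Fin d), π (wrd K r) ≠ 0 → ∃ c : Fin d, π (wrd K (r ++ [c])) ≠ 0 := by
    intro r hr
    obtain ⟨w, hwne, hww⟩ := hprol (π (wrd K r)) ⟨r, rfl⟩ hr
    cases w with
    | nil => exact absurd rfl hwne
    | cons c w =>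
      refine ⟨c, fun hz => hww ?_⟩
      rw [← map_mul π, ← wrd_append]
      have h2 : r ++ c :: w = (r ++ [c]) ++ w := by simp
      rw [h2, wrd_append, map_mul, hz, zero_mul]
  -- extension of nonzero right-prolongations of u to any exact length
  have hext : ∀ m : List (Fin d), π (wrd K (qw ++ m)) ≠ 0 →
      ∀ k : ℕ, ∃ r : List (Fin d), r.length = k ∧ π (wrd K (qw ++ (m ++ r))) ≠ 0 := by
    intro m hm k
    induction k with
    | zero => exact ⟨[], rfl, by simpa using hm⟩
    | succ k ih =>
      obtain ⟨r, hlen, hr⟩ := ih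
      obtain ⟨c, hc⟩ := prol (qw ++ (m ++ r)) hr
      refine ⟨r ++ [c], by simp [hlen], ?_⟩
      have h2 : (qw ++ (m ++ r)) ++ [c] = qw ++ (m ++ (r ++ [c])) := by simp
      rwa [h2] at hc
  -- choose for each j a word of length j prolonging u
  have hexists : ∀ j : ℕ, ∃ r : List (Fin d), r.length = j ∧ π (wrd K (qw ++ r)) ≠ 0 := by
    intro j
    obtain ⟨r, h1, h2⟩ := hext [] (by simpa using hu0) j
    exact ⟨r, h1, by simpa using h2⟩
  choose p hplen hp using hexists
  -- downward uniqueness from the subsingleton hypothesis at length n + E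
  have huniq : ∀ m m' : List (Fin d), m.length = m'.length → m.length ≤ n + E →
      π (wrd K (qw ++ m)) ≠ 0 → π (wrd K (qw ++ m')) ≠ 0 → m = m' := by
    intro m m' hlen hle hm hm'
    obtain ⟨r, hr1, hr2⟩ := hext m hm (n + E - m.length)
    obtain ⟨r', hr1', hr2'⟩ := hext m' hm' (n + E - m'.length)
    have key1 : π (wrd K qw) * π (wrd K (m ++ r)) ≠ 0 := by
      rw [← map_mul π, ← wrd_append]
      exact hr2
    have key2 : π (wrd K qw) * π (wrd K (m' ++ r')) ≠ 0 := by
      rw [← map_mul π, ← wrd_append]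
      exact hr2'
    have hlen1 : (m ++ r).length = n + E := by
      rw [List.length_append, hr1]; omega
    have hlen2 : (m' ++ r').length = n + E := by
      rw [List.length_append, hr1']; omega
    have heq : π (wrd K (m ++ r)) = π (wrd K (m' ++ r')) :=
      hsub ⟨⟨m ++ r, hlen1, rfl⟩, key1⟩ ⟨⟨m' ++ r', hlen2, rfl⟩, key2⟩
    have hne : π (wrd K (m ++ r)) ≠ 0 := fun hz => key1 (by rw [hz, mul_zero])
    have hww : m ++ r = m' ++ r' := wrd_inj π hπ heq hne
    have := congrArg (List.take m.length) hww
    rwa [List.take_left, hlen, List.take_left] at this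
  -- the families of monomials
  have hqlen : ∀ j, (qw ++ p j).length = qw.length + j := by
    intro j; rw [List.length_append, hplen]
  have hfaminj : ∀ m : ℕ, Function.Injective (fun j : Fin m => qw ++ p (j : ℕ)) := by
    intro m i j hij
    have hij' : qw ++ p (i : ℕ) = qw ++ p (j : ℕ) := hij
    have : (qw ++ p (i : ℕ)).length = (qw ++ p (j : ℕ)).length := by rw [hij']
    rw [hqlen, hqlen] at this
    exact Fin.ext (by omega)
  have hli : ∀ m : ℕ, LinearIndependent K (fun j : Fin m => π (wrd K (qw ++ p (j : ℕ)))) :=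
    fun m => li_of_words π hπ _ (hfaminj m) (fun j => hp (j : ℕ))
  set W : Submodule K A :=
    Submodule.span K (Set.range fun j : Fin n => π (wrd K (qw ++ p (j : ℕ)))) with hW
  set W' : Submodule K A :=
    Submodule.span K (Set.range fun j : Fin (n + E) => π (wrd K (qw ++ p (j : ℕ)))) with hW'
  have hfdW : FiniteDimensional K W := FiniteDimensional.span_of_finite K (Set.finite_range _)
  have hfdW' : FiniteDimensional K W' := FiniteDimensional.span_of_finite K (Set.finite_range _)
  have hrkW : finrank K W = n := by
    rw [hW, finrank_span_eq_card (hli n), Fintype.card_fin]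
  have hrkW' : finrank K W' = n + E := by
    rw [hW', finrank_span_eq_card (hli (n + E)), Fintype.card_fin]
  have hWW' : W ≤ W' := by
    rw [hW, Submodule.span_le]
    rintro a ⟨j, rfl⟩
    exact Submodule.subset_span ⟨⟨(j : ℕ), by omega⟩, rfl⟩
  -- key: generators of W times short monomials land in W'
  have key : ∀ i : Fin n, ∀ v ∈ V, π (wrd K (qw ++ p (i : ℕ))) * v ∈ W' := by
    intro i v hv
    have h2 : ME E ≤ Submodule.comap (LinearMap.mulLeft K (π (wrd K (qw ++ p (i : ℕ))))) W' := by
      rw [Submodule.span_le]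
      rintro a ⟨m, hmlen, rfl⟩
      rw [SetLike.mem_coe, Submodule.mem_comap]
      show π (wrd K (qw ++ p (i : ℕ))) * π (wrd K m) ∈ W'
      rw [← map_mul π, ← wrd_append, List.append_assoc]
      by_cases hz : π (wrd K (qw ++ (p (i : ℕ) ++ m))) = 0
      · rw [hz]; exact zero_mem _
      · set j : ℕ := (p (i : ℕ) ++ m).length with hj
        have hjlen : j = (i : ℕ) + m.length := by rw [hj, List.length_append, hplen]
        have hjle : j ≤ n + E := by have := i.isLt; omega
        have : p (i : ℕ) ++ m = p j := by
          refine huniq _ _ ?_ (by rw [← hj]; exact hjle) hz (hp j)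
          rw [← hj, hplen]
        rw [this]
        have hjlt : j < n + E := by have := i.isLt; omega
        exact Submodule.subset_span ⟨⟨j, hjlt⟩, rfl⟩
    exact h2 (hVE hv)
  have hWV : W * V ≤ W' := by
    rw [Submodule.mul_le]
    intro w hw v hv
    have hcom : W ≤ Submodule.comap (LinearMap.mulRight K v) W' := by
      rw [hW, Submodule.span_le]
      rintro a ⟨i, rfl⟩
      rw [SetLike.mem_coe, Submodule.mem_comap]
      exact key i v hv
    exact hcom hw
  have hsup : W ⊔ W * V ≤ W' := sup_le hWW' hWV
  have hfd2 : FiniteDimensional K (W ⊔ W * V : Submodule K A) :=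
    Submodule.finiteDimensional_of_le hsup
  have hrk2 : finrank K (W ⊔ W * V : Submodule K A) ≤ n + E := by
    rw [← hrkW']
    exact Submodule.finrank_mono hsup
  have hmem : finrank K (W ⊔ W * V : Submodule K A) - finrank K W ∈
      {k : ℕ | ∃ W : Submodule K A, FiniteDimensional K W ∧ finrank K W = n ∧
        FiniteDimensional K (W ⊔ W * V : Submodule K A) ∧
        k = finrank K (W ⊔ W * V : Submodule K A) - finrank K W} :=
    ⟨W, hfdW, hrkW, hfd2, rfl⟩
  have := Nat.sInf_le hmem
  rw [isoProfile]
  omega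


end Paper
end
end

section
/- Let W ∈ Σ^ℤ be a uniformly recurrent bi-infinite word over a finite alphabet Σ. Then for every D ∈ ℕ there exists a finite factor u of W for which there is a unique word v of length D over Σ such that the concatenation uv is a factor of W. -/
noncomputable section

namespace Paper

section Stmt5Aux

variable {σ : Type}

def win (W : ℤ → σ) (k : ℤ) (m : ℕ) : List σ := List.ofFn fun i : Fin m => W (k + (i : ℕ))

@[simp] lemma win_length (W : ℤ → σ) (k : ℤ) (m : ℕ) : (win W k m).length = m := by simp [win]

lemma occursAt_iff {W : ℤ → σ} {u : List σ} {k : ℤ} :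
    OccursAt u W k ↔ u = win W k u.length := by
  constructor
  · intro h
    refine List.ext_get (by simp) (fun i h1 h2 => ?_)
    have := h ⟨i, h1⟩
    simp [win] at this ⊢
    exact this.symm
  · intro h i
    rw [List.get_of_eq h]
    simp [win]

lemma occursAt_win (W : ℤ → σ) (k : ℤ) (m : ℕ) : OccursAt (win W k m) W k := by
  rw [occursAt_iff, win_length]

lemma factor_win (W : ℤ → σ) (k : ℤ) (m : ℕ) : FactorZ (win W k m) W := ⟨k, occursAt_win W k m⟩

lemma win_add (W : ℤ → σ) (k : ℤ) (m n : ℕ) :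
    win W k (m + n) = win W k m ++ win W (k + m) n := by
  refine List.ext_get (by simp) (fun i h1 h2 => ?_)
  simp only [win, List.get_ofFn]
  rcases lt_or_ge i m with hi | hi
  · rw [List.get_eq_getElem, List.getElem_append_left (by simpa [win] using hi)]
    simp [win]
  · rw [List.get_eq_getElem, List.getElem_append_right (by simpa [win] using hi)]
    simp only [win, win_length, List.getElem_ofFn, List.length_ofFn, Fin.coe_cast]
    congr 1
    push_cast
    omega

lemma append_eq_win {W : ℤ → σ} {s t : List σ} {k : ℤ} {m : ℕ} (h : s ++ t = win W k m) :
    s = win W k s.length ∧ t = win W (k + s.length) t.length := by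
  have hlen : s.length + t.length = m := by
    have := congrArg List.length h
    simpa using this
  subst hlen
  rw [win_add] at h
  exact List.append_inj h (by simp)

lemma factor_prefix {W : ℤ → σ} {s t : List σ} (h : FactorZ (s ++ t) W) : FactorZ s W := by
  obtain ⟨k, hk⟩ := h
  have := (occursAt_iff.1 hk)
  obtain ⟨hs, _⟩ := append_eq_win this
  exact ⟨k, occursAt_iff.2 hs⟩

lemma factor_suffix {W : ℤ → σ} {s t : List σ} (h : FactorZ (s ++ t) W) : FactorZ t W := by
  obtain ⟨k, hk⟩ := h
  obtain ⟨_, ht⟩ := append_eq_win (occursAt_iff.1 hk)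
  exact ⟨k + s.length, occursAt_iff.2 ht⟩

lemma factor_extend {W : ℤ → σ} {s : List σ} (h : FactorZ s W) (m : ℕ) :
    ∃ v : List σ, v.length = m ∧ FactorZ (s ++ v) W := by
  obtain ⟨k, hk⟩ := h
  refine ⟨win W (k + s.length) m, by simp, ⟨k, occursAt_iff.2 ?_⟩⟩
  rw [occursAt_iff.1 hk]
  simp [← win_add]

lemma infix_occurs {W : ℤ → σ} {u : List σ} {k : ℤ} {N : ℕ} (h : u <:+: win W k N) :
    ∃ p : ℕ, p + u.length ≤ N ∧ u = win W (k + p) u.length := by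
  obtain ⟨s, t, hst⟩ := h
  rw [List.append_assoc] at hst
  obtain ⟨_, h2⟩ := append_eq_win hst
  obtain ⟨h3, _⟩ := append_eq_win h2
  have hlen : s.length + (u.length + t.length) = N := by
    have := congrArg List.length hst; simpa using this
  exact ⟨s.length, by omega, h3⟩

lemma coinc_of_win_eq {W : ℤ → σ} {k k' : ℤ} {m : ℕ} (h : win W k m = win W k' m) :
    ∀ i : ℕ, i < m → W (k + i) = W (k' + i) := by
  intro i hi
  have h2 := List.get_of_eq h ⟨i, by simpa using hi⟩
  simpa [win] using h2

lemma gap_lemma {W : ℤ → σ} (hW : UnifRecurrentZ W) {y : List σ} (hy : y ≠ [])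
    (hyf : FactorZ y W) :
    ∃ Y : List σ, Y ≠ [] ∧ FactorZ Y W ∧
      ∀ a : σ, FactorZ (Y ++ [a]) W → ∃ t : List σ, Y ++ [a] = t ++ y := by
  classical
  obtain ⟨n, hn⟩ : ∃ n : ℕ, y.length = n := ⟨y.length, rfl⟩
  have hn1 : 1 ≤ n := by
    cases y with
    | nil => exact absurd rfl hy
    | cons a l => simp at hn; omega
  obtain ⟨N, hN⟩ := hW y hyf
  have hex : ∀ k : ℤ, ∃ d : ℕ, d ≤ N ∧ OccursAt y W (k - d - n) := by
    intro k
    have hinf : y <:+: win W (k - N) N :=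
      hN _ (factor_win W (k - N) N) (win_length W _ _)
    obtain ⟨p, hpn, hocc⟩ := infix_occurs hinf
    rw [hn] at hpn
    refine ⟨N - p - n, by omega, ?_⟩
    rw [occursAt_iff]
    rw [show (k - ((N : ℕ) - p - n : ℕ) - (n : ℤ)) = k - N + p by omega]
    exact hocc
  set g : ℤ → ℕ := fun k => sInf {d : ℕ | OccursAt y W (k - d - n)} with hg
  have hg_mem : ∀ k, OccursAt y W (k - g k - n) := by
    intro k
    obtain ⟨d, _, hd⟩ := hex k
    exact Nat.sInf_mem (⟨d, hd⟩ : {d : ℕ | OccursAt y W (k - d - n)}.Nonempty)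
  have hg_min : ∀ k, ∀ d < g k, ¬ OccursAt y W (k - d - n) := by
    intro k d hd
    exact Nat.notMem_of_lt_sInf hd
  have hg_bdd : ∀ k, g k ≤ N := by
    intro k
    obtain ⟨d, hdN, hd⟩ := hex k
    exact le_trans (Nat.sInf_le hd) hdN
  set Δ : ℕ := sSup (Set.range g) with hΔ
  have hΔ_mem : Δ ∈ Set.range g := by
    refine Nat.sSup_mem ⟨g 0, Set.mem_range_self 0⟩ ⟨N, ?_⟩
    rintro x ⟨k, rfl⟩; exact hg_bdd k
  obtain ⟨k₀, hk₀⟩ := hΔ_mem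
  have hΔ_le : ∀ k, g k ≤ Δ := by
    intro k
    refine le_csSup ⟨N, ?_⟩ (Set.mem_range_self k)
    rintro x ⟨k', rfl⟩; exact hg_bdd k'
  set P : ℤ := k₀ - Δ - n with hP
  refine ⟨win W P (n + Δ), by
      have := win_length W P (n + Δ); intro hnil; rw [hnil] at this; simp at this; omega,
    factor_win W P (n + Δ), ?_⟩
  intro a hfa
  obtain ⟨q, hq⟩ := hfa
  have hqe : win W P (n + Δ) ++ [a] = win W q (n + Δ + 1) := by
    have h0 := occursAt_iff.1 hq
    simpa using h0
  set d : ℕ := g (q + n + Δ + 1) with hd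
  have hdΔ : d ≤ Δ := hΔ_le _
  have hoccd : OccursAt y W (q + n + Δ + 1 - d - n) := hg_mem _
  rcases Nat.eq_zero_or_pos d with hd0 | hd1
  · -- occurrence of y at the very end: Y++[a] ends with y
    refine ⟨win W q (Δ + 1), ?_⟩
    rw [show (q + (n:ℤ) + Δ + 1 - d - n) = q + ((Δ : ℕ) + 1 : ℕ) by omega] at hoccd
    have h1 : y = win W (q + (Δ + 1 : ℕ)) n := by
      have h2 := occursAt_iff.1 hoccd
      rw [hn] at h2
      exact h2
    rw [hqe, show n + Δ + 1 = (Δ + 1) + n by omega, win_add, ← h1]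
  · -- occurrence strictly inside: contradiction with maximality at k₀
    exfalso
    set j : ℕ := Δ + 1 - d with hj
    have hj1 : 1 ≤ j := by omega
    have hjΔ : j ≤ Δ := by omega
    have hoccj : OccursAt y W (q + j) := by
      rw [show (q + (n:ℤ) + Δ + 1 - d - n) = q + (j : ℕ) by omega] at hoccd
      exact hoccd
    have hYq : win W P (n + Δ) = win W q (n + Δ) := by
      have h2 : win W q (n + Δ + 1) = win W q (n + Δ) ++ win W (q + (n + Δ : ℕ)) 1 :=
        win_add W q (n + Δ) 1
      rw [h2] at hqe
      exact (List.append_inj hqe (by simp)).1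
    have hWcoin := coinc_of_win_eq hYq
    have hoccP : OccursAt y W (P + j) := by
      intro i
      have hin : (i : ℕ) < n := hn ▸ i.isLt
      have h3 : (j : ℕ) + i < n + Δ := by omega
      have h4 := hWcoin (j + i) h3
      rw [show (P + (j:ℕ) + (i:ℕ)) = P + ((j:ℕ) + (i:ℕ) : ℕ) by push_cast; ring, h4]
      rw [show (q + ((j:ℕ) + (i:ℕ) : ℕ) : ℤ) = q + (j:ℕ) + (i:ℕ) by push_cast; ring]
      exact hoccj i
    have hnot : ¬ OccursAt y W (k₀ - (Δ - j : ℕ) - n) := by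
      apply hg_min
      rw [hk₀]; omega
    apply hnot
    rw [show (k₀ - ((Δ:ℕ) - j : ℕ) - (n:ℤ)) = P + j by omega]
    exact hoccP

lemma main_ind {W : ℤ → σ} (hW : UnifRecurrentZ W) (D : ℕ) :
    ∃ y : List σ, y ≠ [] ∧ FactorZ y W ∧
      ∃! v : List σ, v.length = D ∧ FactorZ (y ++ v) W := by
  induction D with
  | zero =>
    refine ⟨[W 0], by simp, ⟨0, ?_⟩, [], ⟨rfl, ?_⟩, ?_⟩
    · intro i
      fin_cases i <;> simp
    · refine ⟨0, ?_⟩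
      intro i
      fin_cases i <;> simp
    · rintro v ⟨hv, -⟩
      exact List.eq_nil_of_length_eq_zero hv
  | succ D ih =>
    obtain ⟨y, hy, hyf, v, ⟨hvlen, hvf⟩, huniq⟩ := ih
    obtain ⟨Y, hYne, hYf, hC⟩ := gap_lemma hW hy hyf
    have helper : ∀ x : List σ, x.length = D + 1 → FactorZ (Y ++ x) W →
        x = y.getLast hy :: v := by
      intro x hxlen hxf
      have hxne : x ≠ [] := by intro h; rw [h] at hxlen; simp at hxlen
      obtain ⟨a, x', rfl⟩ : ∃ a x', x = a :: x' := ⟨x.head hxne, x.tail, (by cases x with | nil => exact absurd rfl hxne | cons b l => rfl)⟩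
      have hx'len : x'.length = D := by simpa using hxlen
      have hsplit : Y ++ (a :: x') = (Y ++ [a]) ++ x' := by simp
      rw [hsplit] at hxf
      have hfa : FactorZ (Y ++ [a]) W := factor_prefix hxf
      obtain ⟨t, ht⟩ := hC a hfa
      have hyx' : FactorZ (y ++ x') W := by
        rw [ht, List.append_assoc] at hxf
        exact factor_suffix hxf
      have hx'v : x' = v := huniq x' ⟨hx'len, hyx'⟩
      have ha : a = y.getLast hy := by
        have h1 : (Y ++ [a]).getLast (by simp) = a := by
          simp
        have h2 : (t ++ y).getLast (by simp [hy]) = y.getLast hy :=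
          List.getLast_append_of_right_ne_nil t y hy
        rw [← h1, ← h2]
        congr 1
      rw [ha, hx'v]
    obtain ⟨v₀, hv₀len, hv₀f⟩ := factor_extend hYf (D + 1)
    have hv₀ : v₀ = y.getLast hy :: v := helper v₀ hv₀len hv₀f
    refine ⟨Y, hYne, hYf, v₀, ⟨hv₀len, hv₀f⟩, ?_⟩
    rintro x ⟨hxlen, hxf⟩
    rw [helper x hxlen hxf, hv₀]

end Stmt5Aux

/-- key combinatorial lemma. Let `W ∈ Σ^ℤ` be a uniformly recurrent
bi-infinite word over a finite alphabet `Σ`. Then for every `D ∈ ℕ` there is a finite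
factor `u` of `W` for which there is a unique word `v` of length `D` such that `u ++ v`
is a factor of `W`. -/
theorem stmt5 (σ : Type) [Fintype σ] (W : ℤ → σ) (hW : UnifRecurrentZ W) (D : ℕ) :
    ∃ u : List σ, FactorZ u W ∧ ∃! v : List σ, v.length = D ∧ FactorZ (u ++ v) W := by
  obtain ⟨y, -, hyf, hu⟩ := main_ind hW D
  exact ⟨y, hyf, hu⟩
end Paper
end
end

section
/- There exists a recurrent bi-infinite word Ω over the four-letter alphabet {w, x, y, z} such that: (i) for every finite factor u of Ω, both uw and uz are factors of Ω (so every factor has at least two distinct one-letter right extensions); and (ii) for every D ∈ ℕ there exists a finite factor u of Ω such that exactly one word v of length D has vu a factor of Ω (a factor with a unique length-D left extension). In particular, such Ω can be taken so that its set of finite factors is the set of all words over {w,x,y,z} avoiding every factor of the form V x y^{2i} x with i ≥ 1, |V| ≤ 2i+2, and V not a suffix of w z^{2i} w. -/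
noncomputable section

namespace Paper

/-- The language of all words over the alphabet `{w, x, y, z}` (encoded as
`w = 0, x = 1, y = 2, z = 3` in `Fin 4`) avoiding every factor of the form
`V x y^{2i} x` with `i ≥ 1`, `|V| ≤ 2i + 2` and `V` not a suffix of `w z^{2i} w`. -/
def lang9 (u : List (Fin 4)) : Prop :=
  ∀ i : ℕ, 1 ≤ i → ∀ V : List (Fin 4), V.length ≤ 2 * i + 2 →
    ¬ V <:+ ([0] ++ List.replicate (2 * i) 3 ++ [0]) →
    ¬ (V ++ [1] ++ List.replicate (2 * i) 2 ++ [1]) <:+: u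

abbrev F4 := Fin 4

def core (j : ℕ) : List F4 := [1] ++ List.replicate (2*j) 2 ++ [1]
def pat (j : ℕ) : List F4 := [0] ++ List.replicate (2*j) 3 ++ [0]

lemma core_length (j : ℕ) : (core j).length = 2*j+2 := by simp [core]
lemma pat_length (j : ℕ) : (pat j).length = 2*j+2 := by simp [pat]
lemma core_ne_nil (j : ℕ) : core j ≠ [] := by simp [core]
lemma core_get (j : ℕ) {r : ℕ} (h : r < (core j).length) :
    (core j)[r] = if r = 0 ∨ r = 2*j+1 then 1 else 2 := by
  rw [core_length] at h
  simp only [core, List.getElem_append, List.length_append, List.length_replicate,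
    List.length_cons, List.length_nil, List.getElem_replicate, List.getElem_cons,
    List.getElem_singleton]
  split_ifs <;> first | rfl | omega
lemma pat_get (j : ℕ) {r : ℕ} (h : r < (pat j).length) :
    (pat j)[r] = if r = 0 ∨ r = 2*j+1 then 0 else 3 := by
  rw [pat_length] at h
  simp only [pat, List.getElem_append, List.length_append, List.length_replicate,
    List.length_cons, List.length_nil, List.getElem_replicate, List.getElem_cons,
    List.getElem_singleton]
  split_ifs <;> first | rfl | omega

lemma seg_get {a w : List F4} {p : ℕ} (h : a <+: w.drop p) {r : ℕ} (hr : r < a.length)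
    (hw : p + r < w.length) : a[r]'hr = w[p+r]'hw := by
  rw [h.getElem hr]; exact List.getElem_drop

lemma seg_len {a w : List F4} {p : ℕ} (h : a <+: w.drop p) (ha : a ≠ []) :
    p + a.length ≤ w.length := by
  have h1 := h.length_le
  rw [List.length_drop] at h1
  rcases Nat.lt_or_ge p w.length with h2 | h2
  · omega
  · rw [List.drop_eq_nil_of_le h2] at h
    exact absurd (List.prefix_nil.mp h) ha

lemma infix_decomp {V a W : List F4} :
    (V ++ a) <:+: W ↔ ∃ p, a <+: W.drop p ∧ V <:+ W.take p := by
  constructor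
  · rintro ⟨s, t, rfl⟩
    have e : s ++ (V ++ a) ++ t = (s ++ V) ++ (a ++ t) := by simp
    refine ⟨(s ++ V).length, ?_, ?_⟩
    · rw [e, List.drop_left]; exact ⟨t, rfl⟩
    · rw [e, List.take_left]; exact ⟨s, rfl⟩
  · rintro ⟨p, ⟨t, ht⟩, ⟨s, hs⟩⟩
    refine ⟨s, t, ?_⟩
    conv_rhs => rw [← List.take_append_drop p W, ← hs, ← ht]
    simp

lemma forb_eq (V : List F4) (j : ℕ) :
    V ++ [1] ++ List.replicate (2*j) 2 ++ [1] = V ++ core j := by simp [core]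

lemma lang9_iff {u : List F4} : lang9 u ↔
    ∀ j, 1 ≤ j → ∀ p V, V.length ≤ 2*j+2 → core j <+: u.drop p → V <:+ u.take p →
      V <:+ pat j := by
  constructor
  · intro H j hj p V hV hc hs
    by_contra hns
    exact H j hj V hV hns (by rw [forb_eq]; exact infix_decomp.mpr ⟨p, hc, hs⟩)
  · intro H j hj V hV hns hinf
    rw [forb_eq] at hinf
    obtain ⟨p, hc, hs⟩ := infix_decomp.mp hinf
    exact hns (H j hj p V hV hc hs)

lemma lang9_nil : lang9 ([] : List F4) := by
  intro i hi V hV hs hinf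
  rw [List.infix_nil] at hinf
  simp at hinf

lemma lang9_infix {u w : List F4} (h : u <:+: w) (hw : lang9 w) : lang9 u :=
  fun i hi V hV hs hinf => hw i hi V hV hs (hinf.trans h)

lemma suffix_append_right {X a b : List F4} (h : X <:+ a ++ b) (hl : X.length ≤ b.length) :
    X <:+ b := by
  rw [List.suffix_iff_eq_drop] at h
  rw [List.length_append,
    show a.length + b.length - X.length = a.length + (b.length - X.length) by omega,
    List.drop_length_add_append] at h
  rw [h]; exact List.drop_suffix _ _

lemma seg_left {a u x : List F4} {p : ℕ} (h : a <+: (u ++ x).drop p)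
    (hb : p + a.length ≤ u.length) : a <+: u.drop p := by
  rw [List.prefix_iff_eq_take] at h ⊢
  conv_lhs => rw [h]
  apply List.ext_getElem
  · simp [List.length_take, List.length_drop, List.length_append]; omega
  · intro i h1 h2
    have hi : i < a.length := by
      simp only [List.length_take, List.length_drop, lt_min_iff] at h1
      exact h1.1
    rw [List.getElem_take, List.getElem_take, List.getElem_drop, List.getElem_drop,
      List.getElem_append_left (by omega)]

/-- A "demand" of `v`: an occurrence of `core j` at position `p < 2j+2`
whose available left context is a suffix of `pat j`. -/
def Dem (v : List F4) (j p : ℕ) : Prop :=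
  1 ≤ j ∧ p < 2*j+2 ∧ core j <+: v.drop p ∧ v.take p <:+ pat j

lemma dem_len {v : List F4} {j p : ℕ} (h : Dem v j p) : p + (2*j+2) ≤ v.length := by
  have := seg_len h.2.2.1 (core_ne_nil j); rwa [core_length] at this

lemma dem_take {v : List F4} {j p : ℕ} (h : Dem v j p) :
    v.take p = (pat j).drop (2*j+2-p) := by
  have hl := dem_len h
  have := List.suffix_iff_eq_drop.mp h.2.2.2
  rwa [pat_length, List.length_take, min_eq_left (by omega)] at this

lemma dem_get_core {v : List F4} {j p : ℕ} (h : Dem v j p) {r : ℕ} (hr : r < 2*j+2)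
    (hv : p + r < v.length) : v[p+r]'hv = if r = 0 ∨ r = 2*j+1 then 1 else 2 := by
  rw [← seg_get h.2.2.1 (by rw [core_length]; exact hr) hv, core_get j (by rw [core_length]; exact hr)]

lemma dem_get_pre {v : List F4} {j p : ℕ} (h : Dem v j p) {i : ℕ} (hi : i < p)
    (hv : i < v.length) : v[i]'hv = if 2*j+2-p+i = 2*j+1 then 0 else 3 := by
  have hp := h.2.1
  have h1 : i < (v.take p).length := by rw [List.length_take]; have := dem_len h; omega
  have h2 : (v.take p)[i]'h1 = v[i]'hv := List.getElem_take
  have h3 := List.getElem_of_eq (dem_take h) h1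
  have h4 : 2*j+2-p+i < (pat j).length := by rw [pat_length]; omega
  rw [← h2, h3, List.getElem_drop, pat_get j h4]
  have : ¬ (2*j+2-p+i = 0) := by omega
  simp only [this, false_or]

lemma dem_not_lt {v : List F4} {j p j' p' : ℕ} (h : Dem v j p) (h' : Dem v j' p') :
    ¬ p < p' := by
  intro hpp
  have hv : p < v.length := by have := dem_len h; omega
  have h1 : v[p]'hv = 1 := by
    have := dem_get_core h (r := 0) (by omega) (by omega)
    simpa using this
  have h2 := dem_get_pre h' hpp hv
  rw [h1] at h2
  split_ifs at h2 <;> exact absurd h2 (by decide)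

lemma dem_not_ltj {v : List F4} {j p j' : ℕ} (h : Dem v j p) (h' : Dem v j' p) :
    ¬ j < j' := by
  intro hjj
  have hv : p + (2*j+1) < v.length := by have := dem_len h; omega
  have h1 : v[p+(2*j+1)]'hv = 1 := by
    rw [dem_get_core h (r := 2*j+1) (by omega) hv]; simp
  have h2 : v[p+(2*j+1)]'hv = 2 := by
    rw [dem_get_core h' (r := 2*j+1) (by omega) hv]
    have : ¬ (2*j+1 = 0 ∨ 2*j+1 = 2*j'+1) := by omega
    simp only [this, if_false]
  rw [h1] at h2; exact absurd h2 (by decide)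

lemma dem_unique {v : List F4} {j p j' p' : ℕ} (h : Dem v j p) (h' : Dem v j' p') :
    j = j' ∧ p = p' := by
  have hp : p = p' := by
    rcases Nat.lt_trichotomy p p' with hlt | he | hlt
    · exact absurd hlt (dem_not_lt h h')
    · exact he
    · exact absurd hlt (dem_not_lt h' h)
  subst hp
  refine ⟨?_, rfl⟩
  rcases Nat.lt_trichotomy j j' with hlt | he | hlt
  · exact absurd hlt (dem_not_ltj h h')
  · exact he
  · exact absurd hlt (dem_not_ltj h' h)

def hasDem (v : List F4) : Prop := ∃ jp : ℕ × ℕ, Dem v jp.1 jp.2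

open Classical in
/-- The completing left context of `v`. -/
noncomputable def ctx (v : List F4) : List F4 :=
  if h : hasDem v then (pat h.choose.1).take (2*h.choose.1+2 - h.choose.2) else []

lemma ctx_spec {v : List F4} {j p : ℕ} (h : Dem v j p) :
    ctx v = (pat j).take (2*j+2-p) := by
  have hd : hasDem v := ⟨(j,p), h⟩
  rw [ctx, dif_pos hd]
  obtain ⟨hj, hp⟩ := dem_unique hd.choose_spec h
  rw [hj, hp]

lemma ctx_mem {v : List F4} {i : ℕ} (hi : i < (ctx v).length) :
    (ctx v)[i] = 0 ∨ (ctx v)[i] = 3 := by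
  by_cases h : hasDem v
  · obtain ⟨⟨j, p⟩, hd⟩ := h
    have he := ctx_spec hd
    have hi' : i < ((pat j).take (2*j+2-p)).length := by rw [← he]; exact hi
    rw [List.getElem_of_eq he hi, List.getElem_take]
    rw [pat_get j (by have := hi'; rw [List.length_take] at this; omega)]
    split_ifs <;> simp
  · rw [ctx, dif_neg h] at hi; simp at hi


lemma sep_mem {v : List F4} : ∀ i (hi : i < (([0,0] : List F4) ++ ctx v).length),
    (([0,0] : List F4) ++ ctx v)[i]'hi = 0 ∨ (([0,0] : List F4) ++ ctx v)[i]'hi = 3 := by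
  intro i hi
  match i, hi with
  | 0, _ => left; rfl
  | 1, _ => left; rfl
  | (n+2), hi =>
    have hn : n < (ctx v).length := by simp at hi; omega
    rw [List.getElem_append_right (by simp)]
    simpa using ctx_mem hn

lemma lang9_join_gen {u v t : List F4} (hu : lang9 u) (hv : lang9 v)
    (htmem : ∀ i (hi : i < t.length), t[i]'hi = 0 ∨ t[i]'hi = 3)
    (htlen : 1 ≤ t.length)
    (hct : ∃ t0, t = t0 ++ ctx v) :
    lang9 (u ++ t ++ v) := by
  rw [lang9_iff]
  intro j hj p V hV hc hs
  have hWlen : (u++t++v).length = u.length + t.length + v.length := by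
    rw [List.length_append, List.length_append]
  have hple : p + (2*j+2) ≤ (u++t++v).length := by
    have := seg_len hc (core_ne_nil j); rwa [core_length] at this
  have hassoc : u ++ t ++ v = u ++ (t ++ v) := by simp
  have hloc : p + (2*j+2) ≤ u.length ∨ u.length + t.length ≤ p := by
    by_contra hno
    push_neg at hno
    obtain ⟨h1, h2⟩ := hno
    set m := max p u.length with hm
    have hmlen : m < (u++t++v).length := by rw [hWlen]; omega
    have hv1 : (u++t++v)[p+(m-p)]'(by rw [hWlen]; omega) =
        (core j)[m-p]'(by rw [core_length]; omega) :=
      (seg_get hc (r := m-p) (by rw [core_length]; omega)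
        (hw := by rw [hWlen]; omega)).symm
    have hv2 : (core j)[m-p]'(by rw [core_length]; omega) =
        t[p+(m-p) - u.length]'(by omega) := by
      rw [← hv1, List.getElem_of_eq hassoc (by rw [hWlen]; omega),
        List.getElem_append_right (by omega),
        List.getElem_append_left (by omega)]
    have hA : (core j)[m-p]'(by rw [core_length]; omega) = 1 ∨
        (core j)[m-p]'(by rw [core_length]; omega) = 2 := by
      rw [core_get j (by rw [core_length]; omega)]
      split_ifs <;> simp
    rcases hA with hA | hA <;> rcases htmem (p+(m-p) - u.length) (by omega) with hB | hB <;>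
      rw [hv2, hB] at hA <;> exact absurd hA (by decide)
  rcases hloc with hL | hR
  · have hc' : core j <+: u.drop p := by
      refine seg_left (x := t ++ v) ?_ (by rw [core_length]; exact hL)
      rwa [← hassoc]
    have hs' : V <:+ u.take p := by
      rwa [hassoc, List.take_append_of_le_length (by omega)] at hs
    exact lang9_iff.mp hu j hj p V hV hc' hs'
  · set p' := p - (u.length + t.length) with hp'
    have hpeq : p = (u ++ t).length + p' := by rw [List.length_append]; omega
    have hdrop : (u++t++v).drop p = v.drop p' := by
      rw [hpeq, List.drop_length_add_append]
    have hc' : core j <+: v.drop p' := by rwa [hdrop] at hc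
    have hp'len : p' + (2*j+2) ≤ v.length := by
      have := seg_len hc' (core_ne_nil j); rwa [core_length] at this
    have htake : (u++t++v).take p = (u ++ t) ++ v.take p' := by
      rw [hpeq, List.take_length_add_append]
    by_cases hcase : V.length ≤ p'
    · have hs' : V <:+ v.take p' := by
        refine suffix_append_right (a := u ++ t) ?_ (by rw [List.length_take]; omega)
        rwa [htake] at hs
      exact lang9_iff.mp hv j hj p' V hV hc' hs'
    · push_neg at hcase
      have hp'2 : p' < 2*j+2 := by omega
      have hvtake : v.take p' <:+ pat j :=
        lang9_iff.mp hv j hj p' (v.take p')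
          (by rw [List.length_take]; omega) hc' (List.suffix_refl _)
      have hdem : Dem v j p' := ⟨hj, hp'2, hc', hvtake⟩
      have hkey : ctx v ++ v.take p' = pat j := by
        rw [ctx_spec hdem, dem_take hdem, List.take_append_drop]
      have hkeylen : (ctx v ++ v.take p').length = 2*j+2 := by
        rw [hkey, pat_length]
      obtain ⟨t0, rfl⟩ := hct
      have htake2 : (u++(t0 ++ ctx v)++v).take p = (u ++ t0) ++ (ctx v ++ v.take p') := by
        rw [htake]; simp
      have hfin : V <:+ ctx v ++ v.take p' := by
        refine suffix_append_right (a := u ++ t0) ?_ (by rw [hkeylen]; omega)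
        rwa [htake2] at hs
      rwa [hkey] at hfin

/-- The join of two words, with separator and completing context. -/
noncomputable def J (u v : List F4) : List F4 := u ++ ([0,0] ++ ctx v) ++ v

lemma lang9_join {u v : List F4} (hu : lang9 u) (hv : lang9 v) : lang9 (J u v) :=
  lang9_join_gen hu hv sep_mem (by simp) ⟨[0,0], rfl⟩


lemma lang9_snoc {u : List F4} (hu : lang9 u) {b : F4} (hb : b = 0 ∨ b = 3) :
    lang9 (u ++ [b]) := by
  rw [lang9_iff]
  intro j hj p V hV hc hs
  have hple : p + (2*j+2) ≤ u.length + 1 := by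
    have := seg_len hc (core_ne_nil j); rw [core_length] at this; simpa using this
  have hlt : p + (2*j+2) ≤ u.length := by
    by_contra hgt
    have h1 : (u++[b])[p + (2*j+1)]'(by simp; omega) =
        (core j)[2*j+1]'(by rw [core_length]; omega) :=
      (seg_get hc (r := 2*j+1) (by rw [core_length]; omega) (by simp; omega)).symm
    have h2 : (u++[b])[p + (2*j+1)]'(by simp; omega) = b := by
      rw [List.getElem_append_right (by omega)]
      simp
    rw [core_get j (by rw [core_length]; omega)] at h1
    simp only [or_true, if_true, if_pos] at h1
    rcases hb with rfl | rfl <;> rw [h2] at h1 <;> exact absurd h1 (by decide)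
  have hc' : core j <+: u.drop p := seg_left (x := [b]) hc (by rw [core_length]; omega)
  have hs' : V <:+ u.take p := by
    rwa [List.take_append_of_le_length (by omega)] at hs
  exact lang9_iff.mp hu j hj p V hV hc' hs'

lemma lang9_zeros {u : List F4} (hu : lang9 u) (T : ℕ) :
    lang9 (u ++ List.replicate T 0) := by
  induction T with
  | zero => simpa using hu
  | succ T ih =>
    have : u ++ List.replicate (T+1) 0 = (u ++ List.replicate T 0) ++ [0] := by
      rw [List.replicate_succ']; simp
    rw [this]
    exact lang9_snoc ih (Or.inl rfl)

lemma lang9_patcore (i : ℕ) : lang9 (pat i ++ core i) := by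
  rw [lang9_iff]
  intro j hj p V hV hc hs
  have hXlen : (pat i ++ core i).length = (2*i+2) + (2*i+2) := by
    simp [pat_length, core_length]
  have hple : p + (2*j+2) ≤ (2*i+2) + (2*i+2) := by
    have := seg_len hc (core_ne_nil j); rw [core_length, hXlen] at this; exact this
  have hp1 : 2*i+2 ≤ p := by
    by_contra hcon
    push_neg at hcon
    have h1 : (pat i ++ core i)[p+0]'(by rw [hXlen]; omega) =
        (core j)[0]'(by rw [core_length]; omega) :=
      (seg_get hc (r := 0) (by rw [core_length]; omega) (by rw [hXlen]; omega)).symm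
    rw [core_get j (by rw [core_length]; omega)] at h1
    simp only [eq_self_iff_true, true_or, if_true] at h1
    rw [List.getElem_append_left (by rw [pat_length]; omega),
      pat_get i (by rw [pat_length]; omega)] at h1
    split_ifs at h1 <;> exact absurd h1 (by decide)
  set p' := p - (2*i+2) with hp'def
  have hpeq : p = (pat i).length + p' := by rw [pat_length]; omega
  have hc' : core j <+: (core i).drop p' := by
    rw [hpeq, List.drop_length_add_append] at hc; exact hc
  have hp'len : p' + (2*j+2) ≤ 2*i+2 := by
    have := seg_len hc' (core_ne_nil j); rw [core_length, core_length] at this; exact this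
  have hp'0 : p' = 0 := by
    have h1 : (core i)[p'+0]'(by rw [core_length]; omega) =
        (core j)[0]'(by rw [core_length]; omega) :=
      (seg_get hc' (r := 0) (by rw [core_length]; omega) (by rw [core_length]; omega)).symm
    rw [core_get j (by rw [core_length]; omega),
      core_get i (by rw [core_length]; omega)] at h1
    simp only [eq_self_iff_true, true_or, if_true] at h1
    by_contra hne
    have : ¬ (p' + 0 = 0 ∨ p' + 0 = 2*i+1) := by omega
    rw [if_neg this] at h1
    exact absurd h1 (by decide)
  have hji : j = i := by
    by_contra hne
    have hjlt : j < i := by omega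
    have h1 : (core i)[p'+(2*j+1)]'(by rw [core_length]; omega) =
        (core j)[2*j+1]'(by rw [core_length]; omega) :=
      (seg_get hc' (r := 2*j+1) (by rw [core_length]; omega)
        (by rw [core_length]; omega)).symm
    rw [core_get j (by rw [core_length]; omega),
      core_get i (by rw [core_length]; omega)] at h1
    simp only [or_true, if_true] at h1
    have : ¬ (p' + (2*j+1) = 0 ∨ p' + (2*j+1) = 2*i+1) := by omega
    rw [if_neg this] at h1
    exact absurd h1 (by decide)
  subst hji
  have hpfull : p = (pat j).length := by rw [pat_length]; omega
  rw [hpfull, List.take_left] at hs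
  exact hs

lemma suffix_eq_of_len {X Y Z : List F4} (h1 : X <:+ Z) (h2 : Y <:+ Z)
    (h : X.length = Y.length) : X = Y := by
  rw [List.suffix_iff_eq_drop.mp h1, List.suffix_iff_eq_drop.mp h2, h]



open Classical in
/-- Enumeration of the words of `lang9`. -/
noncomputable def g (n : ℕ) : List F4 :=
  if h : ∃ u : List F4, Encodable.decode n = some u ∧ lang9 u then h.choose else []

lemma lang9_g (n : ℕ) : lang9 (g n) := by
  rw [g]
  split_ifs with h
  · exact h.choose_spec.2
  · exact lang9_nil

lemma g_encode {u : List F4} (hu : lang9 u) : g (Encodable.encode u) = u := by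
  have hex : ∃ w : List F4, Encodable.decode (Encodable.encode u) = some w ∧ lang9 w :=
    ⟨u, Encodable.encodek u, hu⟩
  rw [g, dif_pos hex]
  have h1 := hex.choose_spec.1
  have h2 : (some u : Option (List F4)) = some hex.choose :=
    (Encodable.encodek u).symm.trans h1
  exact (Option.some.inj h2).symm

/-- The telescope of finite approximations together with their offsets. -/
noncomputable def Wo : ℕ → List F4 × ℤ
  | 0 => ([], 0)
  | n+1 =>
    let w := (Wo n).1
    let pre : List F4 := g n ++ ([0,0] ++ ctx w)
    let post : List F4 := ([0,0] ++ ctx (g n)) ++ g n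
    (pre ++ w ++ post, (Wo n).2 - pre.length)

noncomputable def Wd (n : ℕ) : List F4 := (Wo n).1
noncomputable def od (n : ℕ) : ℤ := (Wo n).2
noncomputable def preB (n : ℕ) : List F4 := g n ++ ([0,0] ++ ctx (Wd n))
noncomputable def postB (n : ℕ) : List F4 := ([0,0] ++ ctx (g n)) ++ g n

lemma Wd_succ (n : ℕ) : Wd (n+1) = preB n ++ Wd n ++ postB n := by
  simp only [Wd, Wo, preB, postB]

lemma od_succ (n : ℕ) : od (n+1) = od n - (preB n).length := by
  simp only [od, Wo, preB, Wd]

lemma Wd_lang9 (n : ℕ) : lang9 (Wd n) := by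
  induction n with
  | zero => exact lang9_nil
  | succ n ih =>
    have h := lang9_join (lang9_join (lang9_g n) ih) (lang9_g n)
    have heq : J (J (g n) (Wd n)) (g n) = preB n ++ Wd n ++ postB n := by
      simp [J, preB, postB]
    rw [Wd_succ, ← heq]
    exact h

lemma preB_len (n : ℕ) : 2 ≤ (preB n).length := by simp [preB]; omega
lemma postB_len (n : ℕ) : 2 ≤ (postB n).length := by simp [postB]

lemma od_le (n : ℕ) : od n ≤ -2 * n ∧ 2 * n ≤ od n + (Wd n).length := by
  induction n with
  | zero => simp [od, Wd, Wo]
  | succ n ih =>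
    have h1 := od_succ n
    have h2 := Wd_succ n
    have l1 := preB_len n
    have l2 := postB_len n
    have hlen : (Wd (n+1)).length
        = (preB n).length + (Wd n).length + (postB n).length := by
      rw [h2]; simp; omega
    constructor
    · rw [h1]; push_cast; omega
    · rw [h1, hlen]; push_cast; omega

lemma chain {n m : ℕ} (h : n ≤ m) : ∃ pre post : List F4,
    Wd m = pre ++ Wd n ++ post ∧ od m = od n - pre.length := by
  induction m, h using Nat.le_induction with
  | base => exact ⟨[], [], by simp, by simp⟩
  | succ m hm ih =>
    obtain ⟨pre, post, h1, h2⟩ := ih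
    refine ⟨preB m ++ pre, post ++ postB m, ?_, ?_⟩
    · rw [Wd_succ, h1]; simp
    · rw [od_succ, h2]; simp only [List.length_append]; push_cast; ring

/-- The bi-infinite word. -/
noncomputable def Om (k : ℤ) : F4 :=
  (Wd (k.natAbs + 1)).getD (k - od (k.natAbs + 1)).toNat 0

lemma Wd_val {n m : ℕ} (h : n ≤ m) {i : ℕ} (hi : i < (Wd n).length) :
    (Wd m).getD (od n + i - od m).toNat 0 = (Wd n).getD i 0 := by
  obtain ⟨pre, post, h1, h2⟩ := chain h
  rw [h2]
  have he : (od n + i - (od n - pre.length)).toNat = pre.length + i := by omega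
  rw [he, h1]
  have h3 : (pre ++ Wd n ++ post) = (pre ++ Wd n) ++ post := by simp
  rw [h3, List.getD_append _ _ _ _ (by simp; omega),
    List.getD_append_right _ _ _ _ (by simp)]
  congr 1
  simp

lemma Om_agree (n : ℕ) {i : ℕ} (hi : i < (Wd n).length) :
    Om (od n + i) = (Wd n).getD i 0 := by
  set k : ℤ := od n + i with hk
  set N : ℕ := k.natAbs + 1 with hN
  have hbn := od_le n
  have hbN := od_le N
  have hkN : od N ≤ k ∧ k + 1 ≤ od N + (Wd N).length := by
    constructor <;> omega
  rcases le_total n N with h | h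
  · have := Wd_val h hi
    show (Wd N).getD (k - od N).toNat 0 = (Wd n).getD i 0
    rw [← this]
  · set jj : ℕ := (k - od N).toNat with hjj
    have hjN : jj < (Wd N).length := by omega
    have := Wd_val h hjN
    have he2 : (od N + jj - od n).toNat = i := by omega
    rw [he2] at this
    show (Wd N).getD jj 0 = (Wd n).getD i 0
    rw [← this]

lemma occursAt_of_seg {u : List F4} {n : ℕ} {a : ℕ} (h : u <+: (Wd n).drop a) :
    OccursAt u Om (od n + a) := by
  intro i
  have hne : u ≠ [] := by
    intro e
    rw [e] at i
    exact absurd i.2 (by simp)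
  have hlen : a + (i : ℕ) < (Wd n).length := by
    have := seg_len h hne
    have := i.2
    omega
  have h1 : u.get i = (Wd n)[a + (i:ℕ)]'hlen := by
    rw [List.get_eq_getElem]
    exact seg_get h i.2 hlen
  have h2 := Om_agree n hlen
  rw [List.getD_eq_getElem _ _ hlen] at h2
  have h3 : (od n + (a:ℤ)) + ((i:ℕ):ℤ) = od n + ((a + (i:ℕ) : ℕ) : ℤ) := by push_cast; ring
  rw [h3, h2, h1]


lemma occursAt_prefix {u w : List F4} (h : u <+: w) {k : ℤ} (hw : OccursAt w Om k) :
    OccursAt u Om k := by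
  intro i
  have hi : (i : ℕ) < w.length := lt_of_lt_of_le i.2 h.length_le
  have := hw ⟨i, hi⟩
  rw [this]
  simp only [List.get_eq_getElem]
  exact (h.getElem i.2).symm

lemma g_occurs (n : ℕ) : ∃ a : ℕ, OccursAt (g n) Om (od (n+1) + a) ∧
    2 * (n:ℤ) ≤ od (n+1) + a := by
  set X : List F4 := preB n ++ Wd n ++ ([0,0] ++ ctx (g n)) with hX
  have hsh : Wd (n+1) = X ++ g n := by
    rw [Wd_succ, postB, hX]; simp only [List.append_assoc]
  refine ⟨X.length, ?_, ?_⟩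
  · apply occursAt_of_seg
    rw [hsh, List.drop_left]
  · have h1 := od_succ n
    have h2 := (od_le n).2
    have hXlen : X.length = (preB n).length + (Wd n).length + (2 + (ctx (g n)).length) := by
      rw [hX]; simp; omega
    rw [h1, hXlen]
    push_cast
    omega

lemma factor_of_lang9 {u : List F4} (hu : lang9 u) : FactorZ u Om := by
  set m := Encodable.encode u with hm
  have hg : g m = u := g_encode hu
  obtain ⟨a, hocc, _⟩ := g_occurs m
  exact ⟨od (m+1) + a, by rw [← hg]; exact hocc⟩

lemma lang9_of_factor {u : List F4} (h : FactorZ u Om) : lang9 u := by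
  obtain ⟨k, hk⟩ := h
  rcases eq_or_ne u [] with rfl | hne
  · exact lang9_nil
  set n : ℕ := k.natAbs + u.length + 1 with hn
  have hb := od_le n
  have hk1 : od n ≤ k := by omega
  have hk2 : k + u.length ≤ od n + (Wd n).length := by omega
  set d : ℕ := (k - od n).toNat with hd
  have hpre : u <+: (Wd n).drop d := by
    rw [List.prefix_iff_eq_take]
    apply List.ext_getElem
    · rw [List.length_take, List.length_drop]; omega
    · intro i h1 h2
      rw [List.getElem_take, List.getElem_drop]
      have hlen : d + i < (Wd n).length := by omega
      have hagree := Om_agree n hlen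
      rw [List.getD_eq_getElem _ _ hlen] at hagree
      have he : od n + ((d + i : ℕ) : ℤ) = k + (i : ℤ) := by push_cast; omega
      rw [he] at hagree
      have hocc := hk ⟨i, h1⟩
      simp only [List.get_eq_getElem] at hocc
      rw [← hagree]
      exact (hocc).symm
  exact lang9_infix (List.infix_iff_prefix_suffix.mpr ⟨_, hpre, List.drop_suffix d _⟩)
    (Wd_lang9 n)

lemma occurs_beyond {u : List F4} (hu : lang9 u) (K : ℤ) :
    ∃ k : ℤ, OccursAt u Om k ∧ K < k := by
  have hinj : Function.Injective (fun T : ℕ => Encodable.encode (u ++ List.replicate T (0:F4))) := by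
    intro a b hab
    simp only at hab
    have := Encodable.encode_injective hab
    have hl := congrArg List.length this
    simp at hl
    exact hl
  have hinf : (Set.range (fun T : ℕ => Encodable.encode (u ++ List.replicate T (0:F4)))).Infinite :=
    Set.infinite_range_of_injective hinj
  obtain ⟨mm, ⟨T, hT⟩, hKm⟩ := hinf.exists_gt K.toNat
  set m := Encodable.encode (u ++ List.replicate T (0:F4)) with hmdef
  have hm : mm = m := by rw [← hT]
  have hg : g m = u ++ List.replicate T 0 := g_encode (lang9_zeros hu T)
  obtain ⟨a, hocc, hpos⟩ := g_occurs m
  have hocc' : OccursAt u Om (od (m+1) + a) :=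
    occursAt_prefix (by rw [hg]; exact ⟨_, rfl⟩) hocc
  refine ⟨od (m+1) + a, hocc', ?_⟩
  have : (K.toNat : ℤ) < m := by exact_mod_cast hm ▸ hKm
  omega



/-- a recurrent word with asymmetric prolongation behaviour. There is a
recurrent bi-infinite word `Ω` over `{w, x, y, z}` (encoded as `0, 1, 2, 3` in `Fin 4`)
such that (i) for every factor `u` of `Ω`, both `u ++ [w]` and `u ++ [z]` are factors of
`Ω`; (ii) for every `D ∈ ℕ` there is a factor `u` of `Ω` with a unique length-`D` left
extension `v` (i.e. exactly one `v` of length `D` with `v ++ u` a factor of `Ω`); and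
moreover `Ω` can be taken so that its finite factors are exactly the words of the
language `lang9`. -/
theorem stmt9 : ∃ Ω : ℤ → Fin 4, RecurrentZ Ω ∧
    (∀ u : List (Fin 4), FactorZ u Ω → FactorZ (u ++ [0]) Ω ∧ FactorZ (u ++ [3]) Ω) ∧
    (∀ D : ℕ, ∃ u : List (Fin 4), FactorZ u Ω ∧
      ∃! v : List (Fin 4), v.length = D ∧ FactorZ (v ++ u) Ω) ∧
    (∀ u : List (Fin 4), FactorZ u Ω ↔ lang9 u) := by
  refine ⟨Om, ?_, ?_, ?_, ?_⟩
  · intro u hu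
    have hl := lang9_of_factor hu
    apply Set.infinite_of_forall_exists_gt
    intro K
    obtain ⟨k, h1, h2⟩ := occurs_beyond hl K
    exact ⟨k, h1, h2⟩
  · intro u hu
    have hl := lang9_of_factor hu
    exact ⟨factor_of_lang9 (lang9_snoc hl (Or.inl rfl)),
      factor_of_lang9 (lang9_snoc hl (Or.inr rfl))⟩
  · intro D
    rcases Nat.eq_zero_or_pos D with rfl | hD
    · refine ⟨[], ⟨0, fun i => absurd i.2 (by simp)⟩,
        ⟨[], ⟨rfl, ⟨0, fun i => absurd i.2 (by simp)⟩⟩, ?_⟩⟩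
      rintro v ⟨hv, -⟩
      exact List.eq_nil_of_length_eq_zero hv
    · refine ⟨core D, ?_, ?_⟩
      · exact factor_of_lang9 (lang9_infix ⟨pat D, [], by simp⟩ (lang9_patcore D))
      · refine ⟨(pat D).drop (D+2), ⟨?_, ?_⟩, ?_⟩
        · rw [List.length_drop, pat_length]; omega
        · apply factor_of_lang9
          apply lang9_infix ?_ (lang9_patcore D)
          refine ⟨(pat D).take (D+2), [], ?_⟩
          rw [List.append_nil, ← List.append_assoc, List.take_append_drop]
        · rintro v ⟨hvlen, hvf⟩
          have hl := lang9_of_factor hvf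
          have hsuf : v <:+ pat D := by
            by_contra hns
            exact hl D hD v (by omega) hns (by rw [forb_eq])
          refine suffix_eq_of_len hsuf (List.drop_suffix _ _) ?_
          rw [hvlen, List.length_drop, pat_length]; omega
  · intro u
    exact ⟨lang9_of_factor, factor_of_lang9⟩


end Paper
end
end
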